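/- arXiv:1109.3704 — 14 statements merged into one kernel-verified Lean document; each statement's English description precedes it below -/
import Mathlib

section
/- Let V be a finite-dimensional inner product space over ℂ of dimension n, let T : V → V be a self-adjoint linear map, and let v₁,…,v_r be an orthonormal family in V with 1 ≤ r ≤ n. Then the family can be extended to an ordered orthonormal basis v₁,…,v_n of V such that for all 1 ≤ i,j ≤ n: ⟨v_i, T v_j⟩ is a nonnegative real number whenever |i−j| = r, and ⟨v_i, T v_j⟩ = 0 whenever |i−j| > r. -/
open scoped ComplexInnerProductSpace

lemma orthonormal_snoc_aux {V : Type*} [NormedAddCommGroup V] [InnerProductSpace ℂ V]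
    {m : ℕ} {w : Fin m → V} (hw : Orthonormal ℂ w) {u : V} (hu : ‖u‖ = 1)
    (huw : ∀ i, ⟪w i, u⟫ = 0) : Orthonormal ℂ (Fin.snoc w u) := by
  rw [orthonormal_iff_ite] at hw ⊢
  intro i j
  induction i using Fin.lastCases with
  | last =>
    induction j using Fin.lastCases with
    | last =>
      simp only [Fin.snoc_last, if_pos rfl]
      rw [inner_self_eq_norm_sq_to_K, hu]; norm_num
    | cast j' =>
      have h1 : ⟪(Fin.snoc w u : Fin (m + 1) → V) (Fin.last m),
          (Fin.snoc w u : Fin (m + 1) → V) j'.castSucc⟫ = 0 := by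
        rw [Fin.snoc_last, Fin.snoc_castSucc, inner_eq_zero_symm]
        exact huw j'
      rw [h1, if_neg (Fin.castSucc_lt_last j').ne']
  | cast i' =>
    induction j using Fin.lastCases with
    | last =>
      have h1 : ⟪(Fin.snoc w u : Fin (m + 1) → V) i'.castSucc,
          (Fin.snoc w u : Fin (m + 1) → V) (Fin.last m)⟫ = 0 := by
        rw [Fin.snoc_last, Fin.snoc_castSucc]
        exact huw i'
      rw [h1, if_neg (Fin.castSucc_lt_last i').ne]
    | cast j' =>
      have h1 : ⟪(Fin.snoc w u : Fin (m + 1) → V) i'.castSucc,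
          (Fin.snoc w u : Fin (m + 1) → V) j'.castSucc⟫ = if i' = j' then 1 else 0 := by
        rw [Fin.snoc_castSucc, Fin.snoc_castSucc]; exact hw i' j'
      rw [h1]
      congr 1
      simp [Fin.castSucc_inj]

/-- **Band Jacobi form, existence (abstract version).**
A self-adjoint operator `T` on an `n`-dimensional complex inner product space admits,
extending any given orthonormal family `v₁, …, v_r` (`1 ≤ r ≤ n`), an ordered orthonormal
basis in which the matrix of `T` is `(2r+1)`-diagonal with nonnegative outer diagonals. -/
theorem stmt_0 {V : Type*} [NormedAddCommGroup V] [InnerProductSpace ℂ V]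
    [FiniteDimensional ℂ V] {n r : ℕ} (hn : Module.finrank ℂ V = n)
    (hr : 1 ≤ r) (hrn : r ≤ n)
    (T : V →ₗ[ℂ] V) (hT : ∀ u w : V, ⟪T u, w⟫ = ⟪u, T w⟫)
    (v : Fin r → V) (hv : Orthonormal ℂ v) :
    ∃ b : OrthonormalBasis (Fin n) ℂ V,
      (∀ i : Fin r, b (Fin.castLE hrn i) = v i) ∧
      (∀ i j : Fin n, |(i.val : ℤ) - (j.val : ℤ)| = (r : ℤ) →
        ∃ t : ℝ, 0 ≤ t ∧ ⟪b i, T (b j)⟫ = (t : ℂ)) ∧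
      (∀ i j : Fin n, (r : ℤ) < |(i.val : ℤ) - (j.val : ℤ)| →
        ⟪b i, T (b j)⟫ = 0) := by
  have key : ∀ m (hrm : r ≤ m), m ≤ n → ∃ w : Fin m → V, Orthonormal ℂ w ∧
      (∀ i : Fin r, w (Fin.castLE hrm i) = v i) ∧
      (∀ j : Fin m, j.1 + r < m → T (w j) ∈ Submodule.span ℂ (Set.range w)) ∧
      (∀ i j : Fin m, i.1 = j.1 + r → ∃ t : ℝ, 0 ≤ t ∧ ⟪w i, T (w j)⟫ = (t : ℂ)) ∧
      (∀ i j : Fin m, j.1 + r < i.1 → ⟪w i, T (w j)⟫ = 0) := by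
    intro m hrm
    induction m, hrm using Nat.le_induction with
    | base =>
      intro _
      refine ⟨v, hv, fun i => congrArg v (Fin.ext rfl), ?_, ?_, ?_⟩
      · intro j hj; exact absurd hj (by omega)
      · intro i j hij; exact absurd hij (by have := i.2; omega)
      · intro i j hij; exact absurd hij (by have := i.2; omega)
    | succ m hrm IH =>
      intro hm1
      obtain ⟨w, hw, hwv, hspan, hdiag, hzero⟩ := IH (by omega)
      set W := Submodule.span ℂ (Set.range w) with hWdef
      set j₀ : Fin m := ⟨m - r, by omega⟩ with hj₀
      set x := T (w j₀) with hxdef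
      set p := (W.orthogonalProjectionOnto x : V) with hpdef
      set z := x - p with hzdef
      have hzW : z ∈ Wᗮ := W.sub_starProjection_mem_orthogonal x
      have hpW : p ∈ W := (W.orthogonalProjectionOnto x).2
      have hxpz : x = p + z := by rw [hzdef]; abel
      obtain ⟨u, huW, hu1, hux, hxmem⟩ :
          ∃ u, u ∈ Wᗮ ∧ ‖u‖ = 1 ∧ ⟪u, x⟫ = ((‖z‖ : ℝ) : ℂ) ∧ x ∈ W ⊔ (ℂ ∙ u) := by
        by_cases hz : z = 0
        · -- pick any unit vector in Wᗮ
          have hWle : Module.finrank ℂ W ≤ m := by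
            classical
            refine le_trans (finrank_span_le_card _) ?_
            rw [Set.toFinset_card]
            exact (Fintype.card_range_le w).trans (by simp)
          have hne : Wᗮ ≠ ⊥ := by
            intro hbot
            have h1 := Submodule.finrank_add_finrank_orthogonal W
            rw [hbot, finrank_bot, hn] at h1
            omega
          obtain ⟨u0, hu0W, hu0⟩ := (Submodule.ne_bot_iff _).mp hne
          have hn0 : ‖u0‖ ≠ 0 := norm_ne_zero_iff.mpr hu0
          refine ⟨((‖u0‖⁻¹ : ℝ) : ℂ) • u0, Submodule.smul_mem _ _ hu0W, ?_, ?_, ?_⟩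
          · rw [norm_smul]
            simp [abs_of_nonneg, inv_mul_cancel₀ hn0]
          · have hxp : x = p := by
              have h0 : x - p = 0 := hz
              linear_combination (norm := module) h0
            rw [hxp, inner_smul_left,
              Submodule.inner_left_of_mem_orthogonal hpW hu0W, hz]
            simp
          · have hxp : x = p := by
              have h0 : x - p = 0 := hz
              linear_combination (norm := module) h0
            rw [hxp]
            exact Submodule.mem_sup_left hpW
        · have hn0 : ‖z‖ ≠ 0 := norm_ne_zero_iff.mpr hz
          refine ⟨((‖z‖⁻¹ : ℝ) : ℂ) • z, Submodule.smul_mem _ _ hzW, ?_, ?_, ?_⟩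
          · rw [norm_smul]
            simp [abs_of_nonneg, inv_mul_cancel₀ hn0]
          · rw [hxpz, inner_add_right]
            simp only [inner_smul_left]
            rw [Submodule.inner_left_of_mem_orthogonal hpW hzW,
              inner_self_eq_norm_sq_to_K, Complex.conj_ofReal]
            have hc : (‖z‖ : ℂ) ≠ 0 := by exact_mod_cast hn0
            rw [mul_zero, zero_add]
            rw [Complex.ofReal_inv]
            field_simp
            rfl
          · rw [hxpz]
            refine Submodule.add_mem _ (Submodule.mem_sup_left hpW)
              (Submodule.mem_sup_right ?_)
            rw [Submodule.mem_span_singleton]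
            refine ⟨((‖z‖ : ℝ) : ℂ), ?_⟩
            rw [smul_smul, ← Complex.ofReal_mul, mul_inv_cancel₀ hn0]
            simp
      set w' : Fin (m + 1) → V := Fin.snoc w u with hw'def
      have hcast : ∀ i : Fin m, w' i.castSucc = w i := fun i => by simp [hw'def]
      have hlast : w' (Fin.last m) = u := by simp [hw'def]
      have hrsub : Set.range w ⊆ Set.range w' := by
        rintro _ ⟨i, rfl⟩; exact ⟨i.castSucc, hcast i⟩
      have hrange : W ⊔ (ℂ ∙ u) ≤ Submodule.span ℂ (Set.range w') := by
        refine sup_le (Submodule.span_mono hrsub) ?_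
        rw [Submodule.span_singleton_le_iff_mem]
        exact Submodule.subset_span ⟨Fin.last m, hlast⟩
      have horth : ∀ i, ⟪w i, u⟫ = 0 := fun i =>
        Submodule.inner_right_of_mem_orthogonal
          (Submodule.subset_span (Set.mem_range_self i)) huW
      have hw' : Orthonormal ℂ w' := orthonormal_snoc_aux hw hu1 horth
      refine ⟨w', hw', ?_, ?_, ?_, ?_⟩
      · intro i
        have h1 : (Fin.castLE (by omega) i : Fin (m + 1)) =
            (Fin.castLE hrm i).castSucc := Fin.ext rfl
        rw [h1, hcast, hwv]
      · intro j hj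
        have hjm : j.1 < m := by omega
        rw [show j = (⟨j.1, hjm⟩ : Fin m).castSucc from Fin.ext rfl, hcast]
        by_cases h : j.1 + r < m
        · exact (le_trans le_sup_left hrange : W ≤ _) (hspan _ h)
        · have hjj : (⟨j.1, hjm⟩ : Fin m) = j₀ := Fin.ext (by simp [hj₀]; omega)
          rw [hjj]
          exact hrange hxmem
      · intro i j hij
        have hjm : j.1 < m := by omega
        rw [show j = (⟨j.1, hjm⟩ : Fin m).castSucc from Fin.ext rfl, hcast]
        by_cases him : i.1 < m
        · rw [show i = (⟨i.1, him⟩ : Fin m).castSucc from Fin.ext rfl, hcast]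
          exact hdiag ⟨i.1, him⟩ ⟨j.1, hjm⟩ hij
        · rw [show i = Fin.last m from Fin.ext (by have := i.isLt; simp; omega), hlast]
          have hjj : (⟨j.1, hjm⟩ : Fin m) = j₀ := Fin.ext (by simp [hj₀]; omega)
          rw [hjj]
          exact ⟨‖z‖, norm_nonneg _, hux⟩
      · intro i j hij
        have hjm : j.1 < m := by omega
        rw [show j = (⟨j.1, hjm⟩ : Fin m).castSucc from Fin.ext rfl, hcast]
        by_cases him : i.1 < m
        · rw [show i = (⟨i.1, him⟩ : Fin m).castSucc from Fin.ext rfl, hcast]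
          exact hzero ⟨i.1, him⟩ ⟨j.1, hjm⟩ hij
        · rw [show i = Fin.last m from Fin.ext (by have := i.isLt; simp; omega), hlast]
          have hmem : T (w ⟨j.1, hjm⟩) ∈ W := by
            refine hspan _ ?_
            show j.1 + r < m
            have h2 := i.isLt
            omega
          exact Submodule.inner_left_of_mem_orthogonal hmem huW
  obtain ⟨w, hw, hwv, _, hdiag, hzero⟩ := key n hrn le_rfl
  have hne : Nonempty (Fin n) := ⟨⟨0, by omega⟩⟩
  have hsp : ⊤ ≤ Submodule.span ℂ (Set.range w) :=
    ge_of_eq (hw.linearIndependent.span_eq_top_of_card_eq_finrank (by simp [hn]))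
  refine ⟨OrthonormalBasis.mk hw hsp, ?_, ?_, ?_⟩
  · intro i
    rw [OrthonormalBasis.coe_mk]
    exact hwv i
  · intro i j habs
    simp only [OrthonormalBasis.coe_mk]
    rw [abs_eq (by positivity)] at habs
    have hcases : i.1 = j.1 + r ∨ j.1 = i.1 + r := by omega
    rcases hcases with h | h
    · exact hdiag i j h
    · obtain ⟨t, ht, hinner⟩ := hdiag j i h
      refine ⟨t, ht, ?_⟩
      calc ⟪w i, T (w j)⟫ = (starRingEnd ℂ) ⟪T (w j), w i⟫ := (inner_conj_symm _ _).symm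
        _ = (starRingEnd ℂ) ⟪w j, T (w i)⟫ := by rw [hT]
        _ = (t : ℂ) := by rw [hinner, Complex.conj_ofReal]
  · intro i j habs
    simp only [OrthonormalBasis.coe_mk]
    rcases abs_cases ((i.1 : ℤ) - (j.1 : ℤ)) with ⟨heq, _⟩ | ⟨heq, _⟩ <;>
      rw [heq] at habs
    · exact hzero i j (by omega)
    · have h0 := hzero j i (by omega)
      calc ⟪w i, T (w j)⟫ = (starRingEnd ℂ) ⟪T (w j), w i⟫ := (inner_conj_symm _ _).symm
        _ = (starRingEnd ℂ) ⟪w j, T (w i)⟫ := by rw [hT]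
        _ = 0 := by rw [h0, map_zero]
end

section
/- Let V be a finite-dimensional inner product space over ℂ of dimension n, T : V → V self-adjoint, and v₁,…,v_r orthonormal with 1 ≤ r ≤ n. Suppose v₁,…,v_r,v_{r+1},…,v_n and v₁,…,v_r,v'_{r+1},…,v'_n are two ordered orthonormal bases of V extending v₁,…,v_r such that each basis satisfies: the inner product of the i-th and T applied to the j-th basis vector is a nonnegative real for |i−j| = r, and is 0 for |i−j| > r. If in addition the first basis satisfies ⟨v_i, T v_j⟩ > 0 for all 1 ≤ i,j ≤ n with |i−j| = r, then v'_i = v_i for all r < i ≤ n. -/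
open scoped ComplexInnerProductSpace

/-- **Band Jacobi form, uniqueness (abstract version).**
If two ordered orthonormal bases extending the same orthonormal family `v₁, …, v_r` both put
the self-adjoint operator `T` into `(2r+1)`-diagonal form with nonnegative outer diagonals,
and the first one has strictly positive outer diagonals, then the two bases agree in all the
extension vectors (indices `> r`). -/
theorem stmt_1 {V : Type*} [NormedAddCommGroup V] [InnerProductSpace ℂ V]
    [FiniteDimensional ℂ V] {n r : ℕ} (hn : Module.finrank ℂ V = n)
    (hr : 1 ≤ r) (hrn : r ≤ n)
    (T : V →ₗ[ℂ] V) (hT : ∀ u w : V, ⟪T u, w⟫ = ⟪u, T w⟫)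
    (v : Fin r → V) (hv : Orthonormal ℂ v)
    (b b' : OrthonormalBasis (Fin n) ℂ V)
    (hb_ext : ∀ i : Fin r, b (Fin.castLE hrn i) = v i)
    (hb'_ext : ∀ i : Fin r, b' (Fin.castLE hrn i) = v i)
    (hb_outer : ∀ i j : Fin n, |(i.val : ℤ) - (j.val : ℤ)| = (r : ℤ) →
      ∃ t : ℝ, 0 ≤ t ∧ ⟪b i, T (b j)⟫ = (t : ℂ))
    (hb_zero : ∀ i j : Fin n, (r : ℤ) < |(i.val : ℤ) - (j.val : ℤ)| →
      ⟪b i, T (b j)⟫ = 0)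
    (hb'_outer : ∀ i j : Fin n, |(i.val : ℤ) - (j.val : ℤ)| = (r : ℤ) →
      ∃ t : ℝ, 0 ≤ t ∧ ⟪b' i, T (b' j)⟫ = (t : ℂ))
    (hb'_zero : ∀ i j : Fin n, (r : ℤ) < |(i.val : ℤ) - (j.val : ℤ)| →
      ⟪b' i, T (b' j)⟫ = 0)
    (hb_pos : ∀ i j : Fin n, |(i.val : ℤ) - (j.val : ℤ)| = (r : ℤ) →
      ∃ t : ℝ, 0 < t ∧ ⟪b i, T (b j)⟫ = (t : ℂ)) :
    ∀ i : Fin n, r ≤ i.val → b' i = b i := by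
  suffices H : ∀ m : ℕ, ∀ i : Fin n, i.val = m → r ≤ i.val → b' i = b i by
    intro i hi; exact H i.val i rfl hi
  intro m
  induction m using Nat.strong_induction_on with
  | _ m IH =>
  intro i him hri
  have key : ∀ k : Fin n, k.val < i.val → b' k = b k := by
    intro k hk
    rcases lt_or_ge k.val r with h | h
    · have hk' : k = Fin.castLE hrn ⟨k.val, h⟩ := by ext; simp
      rw [hk', hb_ext, hb'_ext]
    · exact IH k.val (him ▸ hk) k rfl h
  have hjlt : i.val - r < i.val := by omega
  set j : Fin n := ⟨i.val - r, lt_trans hjlt i.isLt⟩ with hjdef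
  have hjval : j.val = i.val - r := rfl
  have habs : |(i.val : ℤ) - (j.val : ℤ)| = (r : ℤ) := by
    have h1 : (i.val : ℤ) - (j.val : ℤ) = (r : ℤ) := by
      rw [hjval]; push_cast [Nat.cast_sub hri]; ring
    rw [h1, abs_of_nonneg (by positivity)]
  have hbj : b' j = b j := key j hjlt
  set x := T (b j) with hxdef
  have hx' : T (b' j) = x := by rw [hbj]
  obtain ⟨t, ht0, ht⟩ := hb_pos i j habs
  obtain ⟨t', ht'0, ht'⟩ := hb'_outer i j habs
  have hf := b.sum_repr' x
  have hg := b'.sum_repr' x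
  have herase : ∑ k ∈ Finset.univ.erase i, (⟪b k, x⟫ : ℂ) • b k
      = ∑ k ∈ Finset.univ.erase i, (⟪b' k, x⟫ : ℂ) • b' k := by
    apply Finset.sum_congr rfl
    intro k hk
    have hki : k ≠ i := Finset.ne_of_mem_erase hk
    rcases lt_or_gt_of_ne (fun h => hki (Fin.ext h) : k.val ≠ i.val) with h | h
    · rw [key k h]
    · have habs' : (r : ℤ) < |(k.val : ℤ) - (j.val : ℤ)| := by
        have h2 : (0:ℤ) ≤ (k.val : ℤ) - (j.val : ℤ) := by
          rw [hjval]; push_cast [Nat.cast_sub hri]; omega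
        rw [abs_of_nonneg h2, hjval]; push_cast [Nat.cast_sub hri]; omega
      have e1 : (⟪b k, x⟫ : ℂ) = 0 := hb_zero k j habs'
      have e2 : (⟪b' k, x⟫ : ℂ) = 0 := by
        rw [← hx']; exact hb'_zero k j habs'
      rw [e1, e2, zero_smul, zero_smul]
  have heq : (⟪b i, x⟫ : ℂ) • b i = (⟪b' i, x⟫ : ℂ) • b' i := by
    have h1 := Finset.add_sum_erase Finset.univ (fun k => (⟪b k, x⟫ : ℂ) • b k)
      (Finset.mem_univ i)
    have h2 := Finset.add_sum_erase Finset.univ (fun k => (⟪b' k, x⟫ : ℂ) • b' k)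
      (Finset.mem_univ i)
    rw [hf] at h1
    rw [hg] at h2
    have := h1.trans h2.symm
    rw [herase] at this
    exact add_right_cancel this
  rw [ht] at heq
  have ht'x : (⟪b' i, x⟫ : ℂ) = (t' : ℂ) := by rw [← hx']; exact ht'
  rw [ht'x] at heq
  have hnorm : t = t' := by
    have h1 := congrArg norm heq
    rw [norm_smul, norm_smul, b.orthonormal.1 i, b'.orthonormal.1 i] at h1
    simpa [abs_of_nonneg ht0.le, abs_of_nonneg ht'0] using h1
  rw [← hnorm] at heq
  have htne : (t : ℂ) ≠ 0 := by exact_mod_cast ht0.ne'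
  exact (smul_right_injective V htne heq.symm)
end

section
/- Let A be an n×n Hermitian matrix over ℂ and let 1 ≤ r ≤ n. Then there exists a unitary matrix U ∈ U(n) of block-diagonal form U = I_r ⊕ Ũ with Ũ ∈ U(n−r), such that B = U A U† satisfies: B_{ij} is a nonnegative real number for all 1 ≤ i,j ≤ n with |i−j| = r, and B_{ij} = 0 for all 1 ≤ i,j ≤ n with |i−j| > r. -/
open Matrix

private lemma colStep {n : ℕ} (m : ℕ) (w : Fin n → ℂ) :
    ∃ V ∈ Matrix.unitaryGroup (Fin n) ℂ,
      (∀ i j : Fin n, i.val < m → V i j = if i = j then 1 else 0) ∧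
      (∀ i j : Fin n, j.val < m → V i j = if i = j then 1 else 0) ∧
      (∀ i : Fin n, m < i.val → V.mulVec w i = 0) ∧
      (∀ i : Fin n, i.val = m → ∃ t : ℝ, 0 ≤ t ∧ V.mulVec w i = (t : ℂ)) := by
  classical
  set v : EuclideanSpace ℂ (Fin n) := WithLp.toLp 2 (fun j => if m ≤ j.val then w j else 0) with hv
  by_cases hvz : v = 0
  · refine ⟨1, Submonoid.one_mem _, ?_, ?_, ?_, ?_⟩
    · intro i j _; simp [Matrix.one_apply]
    · intro i j _; simp [Matrix.one_apply]
    · intro i hi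
      have : w i = v i := by simp [hv, le_of_lt hi]
      simp [Matrix.one_mulVec, this, hvz]
    · intro i hi
      refine ⟨0, le_refl 0, ?_⟩
      have : w i = v i := by simp [hv, hi.ge]
      simp [Matrix.one_mulVec, this, hvz]
  · have hmn : m < n := by
      by_contra hmn
      apply hvz
      ext j
      have hj : ¬ (m ≤ j.val) := by have := j.isLt; omega
      simp [hv, hj]
    set κ : Fin n := ⟨m, hmn⟩ with hκ
    set u : EuclideanSpace ℂ (Fin n) := (‖v‖ : ℂ)⁻¹ • v with hu
    have hvnorm : (0:ℝ) < ‖v‖ := norm_pos_iff.mpr hvz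
    have hvC : (‖v‖ : ℂ) ≠ 0 := by
      simpa using hvnorm.ne'
    have hunorm : ‖u‖ = 1 := by
      rw [hu, norm_smul]
      simp [norm_inv, hvnorm.ne']
    have hvu : (‖v‖ : ℂ) • u = v := by
      rw [hu, smul_smul, mul_inv_cancel₀ hvC, one_smul]
    have hulow : ∀ j : Fin n, j.val < m → u j = 0 := by
      intro j hj
      have : v j = 0 := by simp [hv, Nat.not_le.mpr hj]
      simp [hu, this]
    set f : Fin n → EuclideanSpace ℂ (Fin n) :=
      fun i => if i.val < m then EuclideanSpace.single i 1 else u with hf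
    set s : Set (Fin n) := {i | i.val ≤ m} with hs
    have hfs : Orthonormal ℂ (s.domRestrict f) := by
      constructor
      · rintro ⟨i, hi⟩
        by_cases him : i.val < m
        · simp [Set.restrict_apply, hf, him, EuclideanSpace.norm_single]
        · simp [Set.restrict_apply, hf, him, hunorm]
      · rintro ⟨i, hi⟩ ⟨j, hj⟩ hij
        have hij' : i ≠ j := fun h => hij (by simpa using h)
        by_cases him : i.val < m <;> by_cases hjm : j.val < m
        · simp [Set.restrict_apply, hf, him, hjm,
            EuclideanSpace.inner_single_left, EuclideanSpace.single_apply, hij'.symm]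
        · simp [Set.restrict_apply, hf, him, hjm, EuclideanSpace.inner_single_left,
            hulow i him]
        · have : inner (𝕜 := ℂ) u (EuclideanSpace.single j (1:ℂ)) = 0 := by
            rw [← inner_conj_symm]
            simp [EuclideanSpace.inner_single_left, hulow j hjm]
          simp [Set.restrict_apply, hf, him, hjm, this]
        · exfalso
          have hiv : i.val = m := by simp only [hs, Set.mem_setOf_eq] at hi; omega
          have hjv : j.val = m := by simp only [hs, Set.mem_setOf_eq] at hj; omega
          exact hij' (Fin.ext (hiv.trans hjv.symm))
    obtain ⟨b, hb⟩ := hfs.exists_orthonormalBasis_extension_of_card_eq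
      (by simp)
    set V : Matrix (Fin n) (Fin n) ℂ := Matrix.of (fun i j => starRingEnd ℂ (b i j)) with hV
    have hVa : ∀ i j, V i j = starRingEnd ℂ (b i j) := fun i j => rfl
    have hrowV : ∀ i j : Fin n, i.val < m → V i j = if i = j then 1 else 0 := by
      intro i j hi
      have hbi : b i = EuclideanSpace.single i 1 := by
        rw [hb i (by simp only [hs, Set.mem_setOf_eq]; omega)]
        simp [hf, hi]
      rw [hVa, hbi]
      simp [EuclideanSpace.single_apply, apply_ite (starRingEnd ℂ), eq_comm]
    have hblow : ∀ i j : Fin n, j.val < m → b i j = if i = j then 1 else 0 := by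
      intro i j hj
      have hbj : b j = EuclideanSpace.single j 1 := by
        rw [hb j (by simp only [hs, Set.mem_setOf_eq]; omega)]
        simp [hf, hj]
      have h1 : (inner ℂ (b j) (b i) : ℂ) = if j = i then 1 else 0 :=
        orthonormal_iff_ite.mp b.orthonormal j i
      have h2 : (inner ℂ (b j) (b i) : ℂ) = b i j := by
        rw [hbj, EuclideanSpace.inner_single_left]; simp
      rw [← h2, h1]
      simp [eq_comm]
    have hcolV : ∀ i j : Fin n, j.val < m → V i j = if i = j then 1 else 0 := by
      intro i j hj
      rw [hVa, hblow i j hj]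
      simp [apply_ite (starRingEnd ℂ)]
    have hVmem : V ∈ Matrix.unitaryGroup (Fin n) ℂ := by
      rw [Matrix.mem_unitaryGroup_iff]
      ext i k
      have h1 : (inner ℂ (b i) (b k) : ℂ) = if i = k then 1 else 0 :=
        orthonormal_iff_ite.mp b.orthonormal i k
      rw [Matrix.mul_apply, Matrix.one_apply, ← h1, PiLp.inner_apply]
      apply Finset.sum_congr rfl
      intro j _
      simp [hVa, Matrix.star_apply, RCLike.inner_apply, mul_comm]
    have hbκ : b κ = u := by
      rw [hb κ (by simp only [hs, Set.mem_setOf_eq, hκ]; omega)]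
      simp [hf, hκ]
    have hmul : ∀ i : Fin n, m ≤ i.val →
        V.mulVec w i = (‖v‖ : ℂ) * (if i = κ then 1 else 0) := by
      intro i hi
      have step1 : V.mulVec w i = ∑ j, starRingEnd ℂ (b i j) * v j := by
        rw [show V.mulVec w i = ∑ j, V i j * w j from rfl]
        apply Finset.sum_congr rfl
        intro j _
        by_cases hjm : j.val < m
        · have hij : i ≠ j := by intro h; rw [h] at hi; omega
          rw [hcolV i j hjm, hblow i j hjm]
          simp [hij]
        · have : w j = v j := by simp [hv, Nat.not_lt.mp hjm]
          rw [hVa, this]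
      have step2 : ∑ j, starRingEnd ℂ (b i j) * v j = (inner ℂ (b i) v : ℂ) := by
        rw [PiLp.inner_apply]
        apply Finset.sum_congr rfl
        intro j _
        simp [RCLike.inner_apply, mul_comm]
      have step3 : (inner ℂ (b i) v : ℂ) = (‖v‖ : ℂ) * (if i = κ then 1 else 0) := by
        conv_lhs => rw [← hvu, ← hbκ]
        rw [inner_smul_right, orthonormal_iff_ite.mp b.orthonormal i κ]
      rw [step1, step2, step3]
    refine ⟨V, hVmem, hrowV, hcolV, ?_, ?_⟩
    · intro i hi
      rw [hmul i (le_of_lt hi)]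
      have : i ≠ κ := by intro h; rw [h] at hi; simp [hκ] at hi
      simp [this]
    · intro i hi
      refine ⟨‖v‖, le_of_lt hvnorm, ?_⟩
      rw [hmul i hi.ge]
      have : i = κ := Fin.ext hi
      simp [this]


private lemma hermitian_conj {n : ℕ} {A U : Matrix (Fin n) (Fin n) ℂ}
    (hA : A.IsHermitian) : (U * A * Uᴴ).IsHermitian := by
  unfold Matrix.IsHermitian
  rw [Matrix.conjTranspose_mul, Matrix.conjTranspose_mul, Matrix.conjTranspose_conjTranspose,
    hA.eq, Matrix.mul_assoc]

private lemma bandAux {n r : ℕ} (hr : 1 ≤ r)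
    (A : Matrix (Fin n) (Fin n) ℂ) (hA : A.IsHermitian) (k : ℕ) :
    ∃ U ∈ Matrix.unitaryGroup (Fin n) ℂ,
      (∀ i j : Fin n, i.val < r → U i j = if i = j then 1 else 0) ∧
      (∀ i j : Fin n, j.val < r → U i j = if i = j then 1 else 0) ∧
      (∀ i j : Fin n, i.val < k ∨ j.val < k →
        (|(i.val : ℤ) - (j.val : ℤ)| = (r : ℤ) →
          ∃ t : ℝ, 0 ≤ t ∧ (U * A * Uᴴ) i j = (t : ℂ)) ∧
        ((r : ℤ) < |(i.val : ℤ) - (j.val : ℤ)| → (U * A * Uᴴ) i j = 0)) := by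
  classical
  induction k with
  | zero =>
    refine ⟨1, Submonoid.one_mem _, ?_, ?_, ?_⟩
    · intro i j _; simp [Matrix.one_apply]
    · intro i j _; simp [Matrix.one_apply]
    · intro i j h; omega
  | succ k ih =>
    obtain ⟨U, hU, hUrow, hUcol, hUband⟩ := ih
    by_cases hk : k < n
    swap
    · refine ⟨U, hU, hUrow, hUcol, ?_⟩
      intro i j _
      exact hUband i j (Or.inl (by omega))
    · set κ : Fin n := ⟨k, hk⟩ with hκ
      set B : Matrix (Fin n) (Fin n) ℂ := U * A * Uᴴ with hB
      have hBh : B.IsHermitian := hermitian_conj hA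
      obtain ⟨V, hV, hVrow, hVcol, hVz, hVnn⟩ := colStep (n := n) (k + r) (fun a => B a κ)
      set B' : Matrix (Fin n) (Fin n) ℂ := V * B * Vᴴ with hB'
      have hB'h : B'.IsHermitian := hermitian_conj hBh
      -- key: entries with column index < k + r
      have key : ∀ i j : Fin n, j.val < k + r → B' i j = ∑ a, V i a * B a j := by
        intro i j hj
        rw [hB', Matrix.mul_apply]
        have : ∀ bb : Fin n, Vᴴ bb j = if j = bb then 1 else 0 := by
          intro bb
          rw [Matrix.conjTranspose_apply, hVrow j bb hj]
          simp [apply_ite (star : ℂ → ℂ)]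
        calc ∑ bb, (V * B) i bb * Vᴴ bb j
            = ∑ bb, (V * B) i bb * (if j = bb then 1 else 0) := by
              apply Finset.sum_congr rfl; intro bb _; rw [this bb]
          _ = (V * B) i j := by simp
          _ = ∑ a, V i a * B a j := Matrix.mul_apply
      -- entries with column index < k are unchanged
      have claimA : ∀ i j : Fin n, j.val < k → B' i j = B i j := by
        intro i j hj
        rw [key i j (by omega)]
        by_cases hi : i.val < k + r
        · rw [Finset.sum_eq_single i]
          · rw [hVrow i _ hi]; simp
          · intro a _ ha
            rw [hVrow i a hi]
            simp [ha.symm]  -- if i = a false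
          · intro h; exact absurd (Finset.mem_univ i) h
        · have hBij : B i j = 0 := by
            refine (hUband i j (Or.inr hj)).2 ?_
            rw [abs_of_nonneg (by omega)]; omega
          rw [hBij]
          apply Finset.sum_eq_zero
          intro a _
          by_cases ham : a.val < k + r
          · rw [hVcol i a ham]
            have : i ≠ a := by intro h; rw [h] at hi; omega
            simp [this]
          · have : B a j = 0 := by
              refine (hUband a j (Or.inr hj)).2 ?_
              rw [abs_of_nonneg (by omega)]; omega
            simp [this]
      have claimA' : ∀ i j : Fin n, i.val < k ∨ j.val < k → B' i j = B i j := by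
        rintro i j (hi | hj)
        · rw [← hB'h.apply, ← hBh.apply, claimA j i hi]
        · exact claimA i j hj
      -- column k of B'
      have claimC : ∀ i : Fin n, B' i κ = V.mulVec (fun a => B a κ) i := by
        intro i
        rw [key i κ (by simp [hκ]; omega)]
        rfl
      -- targets on column κ
      have colCase : ∀ i : Fin n, k ≤ i.val →
          ((|(i.val : ℤ) - (κ.val : ℤ)| = (r : ℤ) →
            ∃ t : ℝ, 0 ≤ t ∧ B' i κ = (t : ℂ)) ∧
           ((r : ℤ) < |(i.val : ℤ) - (κ.val : ℤ)| → B' i κ = 0)) := by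
        intro i hi
        have hκv : (κ.val : ℤ) = (k : ℤ) := by simp [hκ]
        constructor
        · intro habs
          have : i.val = k + r := by
            rw [hκv, abs_of_nonneg (by omega)] at habs; omega
          obtain ⟨t, ht, htv⟩ := hVnn i this
          exact ⟨t, ht, by rw [claimC i]; exact htv⟩
        · intro habs
          have : k + r < i.val := by
            rw [hκv, abs_of_nonneg (by omega)] at habs; omega
          rw [claimC i]
          exact hVz i this
      -- assemble
      refine ⟨V * U, mul_mem hV hU, ?_, ?_, ?_⟩
      · intro i j hi
        rw [Matrix.mul_apply, Finset.sum_eq_single i]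
        · rw [hVrow i i (by omega)]; simp [hUrow i j hi]
        · intro a _ ha
          rw [hVrow i a (by omega)]; simp [ha.symm]
        · intro h; exact absurd (Finset.mem_univ i) h
      · intro i j hj
        rw [Matrix.mul_apply, Finset.sum_eq_single j]
        · rw [hUcol j j hj, hVcol i j (by omega)]; simp
        · intro a _ ha
          rw [hUcol a j hj]; simp [ha]
        · intro h; exact absurd (Finset.mem_univ j) h
      · have hconj : (V * U) * A * (V * U)ᴴ = B' := by
          rw [hB', hB, Matrix.conjTranspose_mul]
          noncomm_ring
        rw [hconj]
        intro i j hij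
        by_cases hik : i.val < k
        · constructor
          · intro h
            obtain ⟨t, ht, htv⟩ := (hUband i j (Or.inl hik)).1 h
            exact ⟨t, ht, by rw [claimA' i j (Or.inl hik)]; exact htv⟩
          · intro h
            rw [claimA' i j (Or.inl hik)]
            exact (hUband i j (Or.inl hik)).2 h
        by_cases hjk : j.val < k
        · constructor
          · intro h
            obtain ⟨t, ht, htv⟩ := (hUband i j (Or.inr hjk)).1 h
            exact ⟨t, ht, by rw [claimA' i j (Or.inr hjk)]; exact htv⟩
          · intro h
            rw [claimA' i j (Or.inr hjk)]
            exact (hUband i j (Or.inr hjk)).2 h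
        -- now i.val = k or j.val = k
        by_cases hjek : j.val = k
        · have hjκ : j = κ := Fin.ext hjek
          rw [hjκ]
          exact colCase i (by omega)
        · have hiek : i.val = k := by omega
          have hiκ : i = κ := Fin.ext hiek
          have hjge : k ≤ j.val := by omega
          have := colCase j hjge
          constructor
          · intro h
            obtain ⟨t, ht, htv⟩ := this.1 (by rw [← h, hiκ, abs_sub_comm])
            refine ⟨t, ht, ?_⟩
            rw [hiκ, ← hB'h.apply, htv]
            simp
          · intro h
            rw [hiκ, ← hB'h.apply, this.2 (by rw [hiκ, abs_sub_comm] at h; exact h)]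
            simp

/-- **Band Jacobi form of a Hermitian matrix, existence.**
For an `n × n` Hermitian matrix `A` and `1 ≤ r ≤ n` there is a unitary `U` of block form
`I_r ⊕ Ũ` (i.e. rows and columns with index `< r` are those of the identity) such that
`B = U A Uᴴ` has nonnegative real entries on the `r`-th off-diagonals (`|i - j| = r`) and
vanishing entries beyond them (`|i - j| > r`). -/
theorem stmt_2 {n r : ℕ} (hr : 1 ≤ r) (hrn : r ≤ n)
    (A : Matrix (Fin n) (Fin n) ℂ) (hA : A.IsHermitian) :
    ∃ U ∈ Matrix.unitaryGroup (Fin n) ℂ,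
      (∀ i j : Fin n, i.val < r → U i j = if i = j then 1 else 0) ∧
      (∀ i j : Fin n, j.val < r → U i j = if i = j then 1 else 0) ∧
      (∀ i j : Fin n, |(i.val : ℤ) - (j.val : ℤ)| = (r : ℤ) →
        ∃ t : ℝ, 0 ≤ t ∧ (U * A * Uᴴ) i j = (t : ℂ)) ∧
      (∀ i j : Fin n, (r : ℤ) < |(i.val : ℤ) - (j.val : ℤ)| →
        (U * A * Uᴴ) i j = 0) := by
  obtain ⟨U, hU, h1, h2, h3⟩ := bandAux hr A hA n
  exact ⟨U, hU, h1, h2,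
    fun i j h => (h3 i j (Or.inl i.isLt)).1 h,
    fun i j h => (h3 i j (Or.inl i.isLt)).2 h⟩
end

section
/- Let A be an n×n Hermitian matrix over ℂ and 1 ≤ r ≤ n. Suppose U = I_r ⊕ Ũ and U' = I_r ⊕ Ũ' are two unitary matrices of the stated block form such that both B = U A U† and B' = U' A U'† satisfy: entries at positions with |i−j| = r are nonnegative reals and entries at positions with |i−j| > r vanish. If in addition B_{ij} > 0 for all i,j with |i−j| = r, then U = U' (and hence B = B'). -/
open Matrix

/-- **Band Jacobi form of a Hermitian matrix, uniqueness.**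
If two unitaries `U, U'` of block form `I_r ⊕ Ũ` both conjugate the Hermitian matrix `A`
into `(2r+1)`-diagonal band form with nonnegative `r`-th off-diagonals, and the band form
`B = U A Uᴴ` has strictly positive `r`-th off-diagonals, then `U = U'`. -/
theorem stmt_3 {n r : ℕ} (hr : 1 ≤ r) (hrn : r ≤ n)
    (A : Matrix (Fin n) (Fin n) ℂ) (hA : A.IsHermitian)
    (U U' : Matrix (Fin n) (Fin n) ℂ)
    (hU : U ∈ Matrix.unitaryGroup (Fin n) ℂ)
    (hU' : U' ∈ Matrix.unitaryGroup (Fin n) ℂ)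
    (hU_row : ∀ i j : Fin n, i.val < r → U i j = if i = j then 1 else 0)
    (hU_col : ∀ i j : Fin n, j.val < r → U i j = if i = j then 1 else 0)
    (hU'_row : ∀ i j : Fin n, i.val < r → U' i j = if i = j then 1 else 0)
    (hU'_col : ∀ i j : Fin n, j.val < r → U' i j = if i = j then 1 else 0)
    (hB_outer : ∀ i j : Fin n, |(i.val : ℤ) - (j.val : ℤ)| = (r : ℤ) →
      ∃ t : ℝ, 0 ≤ t ∧ (U * A * Uᴴ) i j = (t : ℂ))
    (hB_zero : ∀ i j : Fin n, (r : ℤ) < |(i.val : ℤ) - (j.val : ℤ)| →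
      (U * A * Uᴴ) i j = 0)
    (hB'_outer : ∀ i j : Fin n, |(i.val : ℤ) - (j.val : ℤ)| = (r : ℤ) →
      ∃ t : ℝ, 0 ≤ t ∧ (U' * A * U'ᴴ) i j = (t : ℂ))
    (hB'_zero : ∀ i j : Fin n, (r : ℤ) < |(i.val : ℤ) - (j.val : ℤ)| →
      (U' * A * U'ᴴ) i j = 0)
    (hB_pos : ∀ i j : Fin n, |(i.val : ℤ) - (j.val : ℤ)| = (r : ℤ) →
      ∃ t : ℝ, 0 < t ∧ (U * A * Uᴴ) i j = (t : ℂ)) :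
    U = U' ∧ U * A * Uᴴ = U' * A * U'ᴴ := by
  have hUU : Uᴴ * U = 1 := by
    simpa [Matrix.star_eq_conjTranspose] using Matrix.mem_unitaryGroup_iff'.mp hU
  have hUUT : U * Uᴴ = 1 := by
    simpa [Matrix.star_eq_conjTranspose] using Matrix.mem_unitaryGroup_iff.mp hU
  have hU'U' : U'ᴴ * U' = 1 := by
    simpa [Matrix.star_eq_conjTranspose] using Matrix.mem_unitaryGroup_iff'.mp hU'
  have hWunit : (U' * Uᴴ)ᴴ * (U' * Uᴴ) = 1 := by
    calc (U' * Uᴴ)ᴴ * (U' * Uᴴ) = U * ((U'ᴴ * U') * Uᴴ) := by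
          rw [conjTranspose_mul, conjTranspose_conjTranspose]
          simp only [Matrix.mul_assoc]
      _ = 1 := by rw [hU'U', Matrix.one_mul, hUUT]
  have hcomm : (U' * Uᴴ) * (U * A * Uᴴ) = (U' * A * U'ᴴ) * (U' * Uᴴ) := by
    calc (U' * Uᴴ) * (U * A * Uᴴ) = U' * ((Uᴴ * U) * (A * Uᴴ)) := by
          simp only [Matrix.mul_assoc]
      _ = U' * (A * ((U'ᴴ * U') * Uᴴ)) := by rw [hUU, Matrix.one_mul, hU'U', Matrix.one_mul]
      _ = (U' * A * U'ᴴ) * (U' * Uᴴ) := by simp only [Matrix.mul_assoc]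
  have key : ∀ N : ℕ, ∀ j : Fin n, (j : ℕ) = N → ∀ i : Fin n,
      (U' * Uᴴ) i j = if i = j then 1 else 0 := by
    intro N
    induction N using Nat.strong_induction_on with
    | _ N ih =>
      intro j hj i
      by_cases hjr : (j : ℕ) < r
      · rw [Matrix.mul_apply]
        rw [Finset.sum_eq_single j]
        · rw [conjTranspose_apply, hU_row j j hjr, if_pos rfl, star_one, mul_one]
          exact hU'_col i j hjr
        · intro k _ hk
          rw [conjTranspose_apply, hU_row j k hjr, if_neg (Ne.symm hk), star_zero, mul_zero]
        · intro h; exact absurd (Finset.mem_univ j) h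
      · push_neg at hjr
        have hjn := j.isLt
        set m : Fin n := ⟨(j : ℕ) - r, by omega⟩ with hmdef
        have hmv : (m : ℕ) = (j : ℕ) - r := rfl
        have hmlt : (m : ℕ) < (j : ℕ) := by omega
        have ihc : ∀ k : Fin n, (k : ℕ) < (j : ℕ) → ∀ i' : Fin n,
            (U' * Uᴴ) i' k = if i' = k then 1 else 0 := by
          intro k hk i'
          exact ih (k : ℕ) (by omega) k rfl i'
        -- entries above the diagonal (in column j) vanish, by orthogonality
        have hcol0 : ∀ k : Fin n, (k : ℕ) < (j : ℕ) → (U' * Uᴴ) k j = 0 := by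
          intro k hk
          have hkj : k ≠ j := by intro h; rw [h] at hk; omega
          have h1 : ((U' * Uᴴ)ᴴ * (U' * Uᴴ)) k j = (1 : Matrix (Fin n) (Fin n) ℂ) k j := by
            rw [hWunit]
          rw [Matrix.mul_apply, Matrix.one_apply_ne hkj] at h1
          have h2 : ∀ x : Fin n, ((U' * Uᴴ)ᴴ) k x * (U' * Uᴴ) x j
              = if x = k then (U' * Uᴴ) k j else 0 := by
            intro x
            rw [conjTranspose_apply, ihc k hk x]
            by_cases hx : x = k <;> simp [hx]
          rw [Finset.sum_congr rfl (fun x _ => h2 x)] at h1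
          simpa using h1
        have habsjm : |((j : ℕ) : ℤ) - ((m : ℕ) : ℤ)| = (r : ℤ) := by
          rw [abs_of_nonneg (by omega)]; omega
        obtain ⟨β, hβpos, hβ⟩ := hB_pos j m habsjm
        have heq : ∀ i' : Fin n, (j : ℕ) ≤ (i' : ℕ) →
            (U' * Uᴴ) i' j * (U * A * Uᴴ) j m = (U' * A * U'ᴴ) i' m := by
          intro i' hi'
          have h := Matrix.ext_iff.mpr hcomm i' m
          rw [Matrix.mul_apply, Matrix.mul_apply] at h
          have hL : (∑ x, (U' * Uᴴ) i' x * (U * A * Uᴴ) x m)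
              = (U' * Uᴴ) i' j * (U * A * Uᴴ) j m := by
            apply Finset.sum_eq_single_of_mem j (Finset.mem_univ j)
            intro k _ hk
            by_cases hkj : (k : ℕ) < (j : ℕ)
            · rw [ihc k hkj i']
              have : i' ≠ k := by intro h'; rw [h'] at hi'; omega
              rw [if_neg this, zero_mul]
            · have hkgt : (j : ℕ) < (k : ℕ) := by
                rcases Nat.lt_or_ge (j : ℕ) (k : ℕ) with h' | h'
                · exact h'
                · exact absurd (Fin.ext (by omega) : k = j) hk
              have : (r : ℤ) < |((k : ℕ) : ℤ) - ((m : ℕ) : ℤ)| := by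
                rw [abs_of_nonneg (by omega)]; omega
              rw [hB_zero k m this, mul_zero]
          have hR : (∑ x, (U' * A * U'ᴴ) i' x * (U' * Uᴴ) x m)
              = (U' * A * U'ᴴ) i' m * (U' * Uᴴ) m m := by
            apply Finset.sum_eq_single_of_mem m (Finset.mem_univ m)
            intro k _ hk
            rw [ihc m hmlt k, if_neg hk, mul_zero]
          rw [ihc m hmlt m, if_pos rfl, mul_one] at hR
          rw [hL, hR] at h
          exact h
        have hβne : ((β : ℂ)) ≠ 0 := by exact_mod_cast ne_of_gt hβpos
        have hzero_gt : ∀ i' : Fin n, (j : ℕ) < (i' : ℕ) → (U' * Uᴴ) i' j = 0 := by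
          intro i' hi'
          have h1 := heq i' (le_of_lt hi')
          have h0 : (U' * A * U'ᴴ) i' m = 0 := by
            apply hB'_zero
            rw [abs_of_nonneg (by omega)]; omega
          rw [h0, hβ] at h1
          rcases mul_eq_zero.mp h1 with h | h
          · exact h
          · exact absurd h hβne
        rcases lt_trichotomy (i : ℕ) (j : ℕ) with hlt | heqv | hgt
        · have hne : i ≠ j := by intro h; rw [h] at hlt; omega
          rw [hcol0 i hlt, if_neg hne]
        · have hij : i = j := Fin.ext heqv
          rw [hij, if_pos rfl]
          obtain ⟨β', hβ'nn, hβ'⟩ := hB'_outer j m habsjm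
          have h1 := heq j (le_refl _)
          rw [hβ, hβ'] at h1
          have hWjj : (U' * Uᴴ) j j = ((β' / β : ℝ) : ℂ) := by
            rw [Complex.ofReal_div]
            exact eq_div_of_mul_eq hβne h1
          have hd : ((U' * Uᴴ)ᴴ * (U' * Uᴴ)) j j = 1 := by
            rw [hWunit, Matrix.one_apply_eq]
          rw [Matrix.mul_apply] at hd
          have h3 : (∑ x, ((U' * Uᴴ)ᴴ) j x * (U' * Uᴴ) x j)
              = star ((U' * Uᴴ) j j) * (U' * Uᴴ) j j := by
            apply Finset.sum_eq_single_of_mem j (Finset.mem_univ j)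
            intro k _ hk
            have hzero : (U' * Uᴴ) k j = 0 := by
              rcases lt_trichotomy (k : ℕ) (j : ℕ) with h' | h' | h'
              · exact hcol0 k h'
              · exact absurd (Fin.ext h') hk
              · exact hzero_gt k h'
            rw [conjTranspose_apply]
            rw [hzero, mul_zero]
          rw [h3, hWjj] at hd
          rw [Complex.star_def, Complex.conj_ofReal] at hd
          have hsq : ((β' / β) * (β' / β) : ℝ) = 1 := by exact_mod_cast hd
          have hbnn : (0 : ℝ) ≤ β' / β := div_nonneg hβ'nn (le_of_lt hβpos)
          have hb1 : (β' / β : ℝ) = 1 := by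
            rcases mul_eq_zero.mp (show ((β' / β : ℝ) - 1) * ((β' / β) + 1) = 0 by
              linear_combination hsq) with h | h
            · linarith
            · linarith
          rw [hWjj, hb1, Complex.ofReal_one]
        · have hne : i ≠ j := by intro h; rw [h] at hgt; omega
          rw [hzero_gt i hgt, if_neg hne]
  have hW1 : U' * Uᴴ = 1 := by
    ext i j
    rw [key (j : ℕ) j rfl i, Matrix.one_apply]
  have hUeq : U = U' := by
    have h : (U' * Uᴴ) * U = U' := by
      rw [Matrix.mul_assoc, hUU, Matrix.mul_one]
    rw [hW1, Matrix.one_mul] at h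
    exact h
  exact ⟨hUeq, by rw [hUeq]⟩
end

section
/- Let V be a finite-dimensional inner product space over ℂ of dimension n, T : V → V self-adjoint, and v₁,…,v_r orthonormal with 1 ≤ r ≤ n. Define the Krylov sequence u₁, u₂, … by u_{qr+i} = T^q v_i for q ≥ 0 and 1 ≤ i ≤ r (so the sequence is v₁,…,v_r, Tv₁,…,Tv_r, T²v₁,…). If the first n vectors u₁,…,u_n are linearly independent, then the Gram–Schmidt orthonormalization e₁,…,e_n of u₁,…,u_n is an orthonormal basis of V with e_i = v_i for 1 ≤ i ≤ r, and it satisfies ⟨e_i, T e_j⟩ = 0 for |i−j| > r and ⟨e_i, T e_j⟩ is a strictly positive real for |i−j| = r. -/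
open scoped ComplexInnerProductSpace

/-- Shortcut instance (worksaround a typeclass-resolution issue for `Fin n`). -/
instance (n : ℕ) : WellFoundedLT (Fin n) := inferInstance

/-- **The band Jacobi basis via the Krylov sequence and Gram–Schmidt.**
Let `T` be self-adjoint on an `n`-dimensional complex inner product space, let
`v₁, …, v_r` be orthonormal (`1 ≤ r ≤ n`), and let `u` be the Krylov sequence
`u_{qr+i} = T^q v_i`.  If the first `n` Krylov vectors are linearly independent, then their
Gram–Schmidt orthonormalization `e` is an orthonormal basis of `V` extending `v₁, …, v_r`,
and in this basis `T` is `(2r+1)`-diagonal with strictly positive outer diagonals. -/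
theorem stmt_4 {V : Type*} [NormedAddCommGroup V] [InnerProductSpace ℂ V]
    [FiniteDimensional ℂ V] {n r : ℕ} (hn : Module.finrank ℂ V = n)
    (hr : 1 ≤ r) (hrn : r ≤ n)
    (T : V →ₗ[ℂ] V) (hT : ∀ u w : V, ⟪T u, w⟫ = ⟪u, T w⟫)
    (v : Fin r → V) (hv : Orthonormal ℂ v)
    (u : Fin n → V)
    (hu : ∀ k : Fin n, u k = (T ^ (k.val / r)) (v ⟨k.val % r, Nat.mod_lt _ hr⟩))
    (hind : LinearIndependent ℂ u) :
    Orthonormal ℂ (InnerProductSpace.gramSchmidtNormed ℂ u) ∧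
    Submodule.span ℂ (Set.range (InnerProductSpace.gramSchmidtNormed ℂ u)) = ⊤ ∧
    (∀ i : Fin r, InnerProductSpace.gramSchmidtNormed ℂ u (Fin.castLE hrn i) = v i) ∧
    (∀ i j : Fin n, (r : ℤ) < |(i.val : ℤ) - (j.val : ℤ)| →
      ⟪InnerProductSpace.gramSchmidtNormed ℂ u i, T (InnerProductSpace.gramSchmidtNormed ℂ u j)⟫ = 0) ∧
    (∀ i j : Fin n, |(i.val : ℤ) - (j.val : ℤ)| = (r : ℤ) →
      ∃ t : ℝ, 0 < t ∧ ⟪InnerProductSpace.gramSchmidtNormed ℂ u i, T (InnerProductSpace.gramSchmidtNormed ℂ u j)⟫ = (t : ℂ)) := by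
  have hr0 : 0 < r := hr
  set g : Fin n → V := InnerProductSpace.gramSchmidt ℂ u with hg
  set e : Fin n → V := InnerProductSpace.gramSchmidtNormed ℂ u with he
  have hedef : ∀ i : Fin n, e i = ((‖g i‖ : ℂ))⁻¹ • g i := fun i => rfl
  -- T shifts the Krylov sequence by r
  have hTu : ∀ (k : Fin n) (hk : k.val + r < n), T (u k) = u ⟨k.val + r, hk⟩ := by
    intro k hk
    rw [hu k, hu ⟨k.val + r, hk⟩]
    have h1 : (k.val + r) / r = k.val / r + 1 := Nat.add_div_right _ hr0
    have h2 : (k.val + r) % r = k.val % r := Nat.add_mod_right _ _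
    simp only [h1, h2, pow_succ', Module.End.mul_apply]
  -- g j lies in span of u up to j
  have hgmem : ∀ j : Fin n, g j ∈ Submodule.span ℂ (u '' Set.Iic j) :=
    fun j => InnerProductSpace.gramSchmidt_mem_span ℂ u le_rfl
  -- u i - g i lies in span of earlier u's
  have hsub : ∀ i : Fin n, u i - g i ∈ Submodule.span ℂ (u '' Set.Iio i) := by
    intro i
    have h := InnerProductSpace.gramSchmidt_def' ℂ u i
    have : u i - g i = ∑ k ∈ Finset.Iio i,
        (ℂ ∙ g k).starProjection (u i) := by
      rw [← hg] at h; nth_rewrite 1 [h]; abel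
    rw [this, ← InnerProductSpace.span_gramSchmidt_Iio ℂ u i]
    refine Submodule.sum_mem _ fun k hk => ?_
    have hk' : k < i := Finset.mem_Iio.1 hk
    have : (ℂ ∙ g k) ≤ Submodule.span ℂ (InnerProductSpace.gramSchmidt ℂ u '' Set.Iio i) := by
      rw [Submodule.span_le, Set.singleton_subset_iff]
      exact Submodule.subset_span ⟨k, hk', rfl⟩
    exact this (SetLike.coe_mem _)
  -- e i is orthogonal to span of earlier u's
  have hperp : ∀ (i : Fin n) (x : V), x ∈ Submodule.span ℂ (u '' Set.Iio i) →
      ⟪e i, x⟫ = 0 := by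
    intro i x hx
    rw [← InnerProductSpace.span_gramSchmidt_Iio ℂ u i] at hx
    induction hx using Submodule.span_induction with
    | mem y hy =>
      obtain ⟨k, hk, rfl⟩ := hy
      rw [hedef, inner_smul_left]
      rw [InnerProductSpace.gramSchmidt_orthogonal ℂ u (ne_of_gt hk), mul_zero]
    | zero => exact inner_zero_right _
    | add y z _ _ hy hz => rw [inner_add_right, hy, hz, add_zero]
    | smul a y _ hy => rw [inner_smul_right, hy, mul_zero]
  -- T maps span of u up to j into span of u up to (j+r)
  have hTmapIic : ∀ (j m : Fin n), j.val + r ≤ m.val → ∀ x ∈ Submodule.span ℂ (u '' Set.Iic j),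
      T x ∈ Submodule.span ℂ (u '' Set.Iic m) := by
    intro j m hjm x hx
    induction hx using Submodule.span_induction with
    | mem y hy =>
      obtain ⟨k, hk, rfl⟩ := hy
      simp only [Set.mem_Iic, Fin.le_def] at hk
      have hm' := m.isLt
      have hkm : k.val + r < n := by omega
      rw [hTu k hkm]
      exact Submodule.subset_span ⟨⟨k.val + r, hkm⟩, by
        simp only [Set.mem_Iic, Fin.le_def]; omega, rfl⟩
    | zero => simpa using Submodule.zero_mem _
    | add y z _ _ hy hz => rw [map_add]; exact Submodule.add_mem _ hy hz
    | smul a y _ hy => rw [map_smul]; exact Submodule.smul_mem _ _ hy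
  have hTmapIio : ∀ (j m : Fin n), j.val + r ≤ m.val → ∀ x ∈ Submodule.span ℂ (u '' Set.Iio j),
      T x ∈ Submodule.span ℂ (u '' Set.Iio m) := by
    intro j m hjm x hx
    induction hx using Submodule.span_induction with
    | mem y hy =>
      obtain ⟨k, hk, rfl⟩ := hy
      simp only [Set.mem_Iio, Fin.lt_def] at hk
      have hm' := m.isLt
      have hkm : k.val + r < n := by omega
      rw [hTu k hkm]
      refine Submodule.subset_span ⟨⟨k.val + r, hkm⟩, ?_, rfl⟩
      simp only [Set.mem_Iio, Fin.lt_def]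
      omega
    | zero => simpa using Submodule.zero_mem _
    | add y z _ _ hy hz => rw [map_add]; exact Submodule.add_mem _ hy hz
    | smul a y _ hy => rw [map_smul]; exact Submodule.smul_mem _ _ hy
  -- band zero, lower triangular part
  have hband : ∀ i j : Fin n, j.val + r < i.val → ⟪e i, T (e j)⟫ = 0 := by
    intro i j hij
    rw [hedef j, map_smul, inner_smul_right]
    have hm : j.val + r < n := lt_trans hij i.isLt
    have hTg : T (g j) ∈ Submodule.span ℂ (u '' Set.Iic ⟨j.val + r, hm⟩) :=
      hTmapIic j ⟨j.val + r, hm⟩ le_rfl _ (hgmem j)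
    have hmono : Submodule.span ℂ (u '' Set.Iic (⟨j.val + r, hm⟩ : Fin n)) ≤
        Submodule.span ℂ (u '' Set.Iio i) := by
      refine Submodule.span_mono (Set.image_mono ?_)
      intro k hk
      simp only [Set.mem_Iic, Fin.le_def] at hk
      simp only [Set.mem_Iio, Fin.lt_def]
      omega
    rw [hperp i _ (hmono hTg), mul_zero]
  -- ⟪e i, g i⟫ = ‖g i‖
  have hginner : ∀ i : Fin n, ⟪e i, g i⟫ = (‖g i‖ : ℂ) := by
    intro i
    have h0 : g i ≠ 0 := InnerProductSpace.gramSchmidt_ne_zero i hind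
    have hne : (‖g i‖ : ℝ) ≠ 0 := norm_ne_zero_iff.2 h0
    have hcne : ((‖g i‖ : ℝ) : ℂ) ≠ 0 := Complex.ofReal_ne_zero.2 hne
    rw [hedef, inner_smul_left, inner_self_eq_norm_sq_to_K, map_inv₀, Complex.conj_ofReal, sq]
    field_simp
    rfl
  -- the subdiagonal entries
  have hdiag : ∀ i j : Fin n, i.val = j.val + r →
      ∃ t : ℝ, 0 < t ∧ ⟪e i, T (e j)⟫ = (t : ℂ) := by
    intro i j hij
    have hgj0 : g j ≠ 0 := InnerProductSpace.gramSchmidt_ne_zero j hind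
    have hgi0 : g i ≠ 0 := InnerProductSpace.gramSchmidt_ne_zero i hind
    refine ⟨‖g i‖ / ‖g j‖, div_pos (norm_pos_iff.2 hgi0) (norm_pos_iff.2 hgj0), ?_⟩
    rw [hedef j, map_smul, inner_smul_right]
    -- T (g j) = u i - T (u j - g j)
    have hk : j.val + r < n := hij ▸ i.isLt
    have hui : T (u j) = u i := by
      rw [hTu j hk]
      congr 1
      exact Fin.ext hij.symm
    have hdecomp : T (g j) = u i - T (u j - g j) := by
      rw [map_sub, hui]; abel
    rw [hdecomp, inner_sub_right]
    have h2 : ⟪e i, T (u j - g j)⟫ = 0 := by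
      refine hperp i _ (hTmapIio j i (le_of_eq hij.symm) _ (hsub j))
    rw [h2, sub_zero]
    have h3 : ⟪e i, u i⟫ = (‖g i‖ : ℂ) := by
      have : u i = g i + (u i - g i) := by abel
      rw [this, inner_add_right, hginner i, hperp i _ (hsub i), add_zero]
    rw [h3]
    push_cast
    rw [div_eq_inv_mul]
  -- the first n Krylov vectors span V
  have hspan : Submodule.span ℂ (Set.range u) = ⊤ :=
    hind.span_eq_top_of_card_eq_finrank' (by simp [hn])
  -- e fixes the initial orthonormal vectors
  have hfix' : ∀ m : ℕ, ∀ i : Fin n, i.val = m → i.val < r → g i = u i := by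
    intro m
    induction m using Nat.strong_induction_on with
    | _ m ih =>
      intro i him hi
      have huv : ∀ k : Fin n, ∀ hk : k.val < r, u k = v ⟨k.val, hk⟩ := by
        intro k hk
        rw [hu k]
        have h1 : k.val / r = 0 := Nat.div_eq_of_lt hk
        have h2 : k.val % r = k.val := Nat.mod_eq_of_lt hk
        simp only [h1, h2, pow_zero, Module.End.one_apply]
      rw [hg, InnerProductSpace.gramSchmidt_def ℂ u i]
      have hzero : ∀ k ∈ Finset.Iio i,
          (ℂ ∙ InnerProductSpace.gramSchmidt ℂ u k).starProjection (u i) = 0 := by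
        intro k hk
        have hki : k < i := Finset.mem_Iio.1 hk
        have hki' : k.val < i.val := hki
        have hkr : k.val < r := lt_trans hki' hi
        have hkm : k.val < m := by omega
        have hgk : InnerProductSpace.gramSchmidt ℂ u k = u k := ih k.val hkm k rfl hkr
        have hinner : ⟪InnerProductSpace.gramSchmidt ℂ u k, u i⟫ = 0 := by
          rw [hgk, huv k hkr, huv i hi]
          exact hv.2 (by simp [Fin.ext_iff]; omega)
        rw [Submodule.starProjection_singleton, hinner, zero_div, zero_smul]
      rw [Finset.sum_congr rfl hzero, Finset.sum_const_zero, sub_zero]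
  refine ⟨InnerProductSpace.gramSchmidtNormed_orthonormal hind, ?_, ?_, ?_, ?_⟩
  · rw [he, InnerProductSpace.span_gramSchmidtNormed_range, InnerProductSpace.span_gramSchmidt, hspan]
  · intro i
    have hi : (Fin.castLE hrn i).val < r := i.isLt
    have huv : u (Fin.castLE hrn i) = v i := by
      rw [hu]
      have h1 : ((Fin.castLE hrn i : Fin n) : ℕ) / r = 0 := Nat.div_eq_of_lt hi
      have h2 : ((Fin.castLE hrn i : Fin n) : ℕ) % r = i.val := Nat.mod_eq_of_lt hi
      simp only [h1, h2, pow_zero, Module.End.one_apply]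
    rw [hedef, hfix' _ _ rfl hi, huv, hv.1 i]
    norm_num
  · intro i j hij
    rcases abs_cases ((i.val : ℤ) - (j.val : ℤ)) with ⟨habs, _⟩ | ⟨habs, _⟩
    · exact hband i j (by omega)
    · have h0 : ⟪e j, T (e i)⟫ = 0 := hband j i (by omega)
      rw [← hT, ← inner_conj_symm, h0, map_zero]
  · intro i j hij
    rcases abs_cases ((i.val : ℤ) - (j.val : ℤ)) with ⟨habs, _⟩ | ⟨habs, _⟩
    · exact hdiag i j (by omega)
    · obtain ⟨t, ht, hte⟩ := hdiag j i (by omega)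
      refine ⟨t, ht, ?_⟩
      rw [← hT, ← inner_conj_symm, hte, Complex.conj_ofReal]
end

section
/- Let r ≥ 1, let Y : [0,∞) → M_r(ℂ) be continuous, let W ∈ M_r(ℂ), and let Λ ∈ ℂ. Then the set of continuously differentiable functions f : [0,∞) → ℂ^r satisfying f'(x) = W f(0) + Y(x) f(x) − ∫₀ˣ Y(t) f'(t) dt − Λ ∫₀ˣ f(t) dt for all x ≥ 0 is a complex vector subspace of dimension at most r. (Consequently, each eigenspace of the half-line operator is at most r-dimensional.) -/
open MeasureTheory Matrix Set intervalIntegral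

private lemma aux_norm_mulVec {r : ℕ} (A : Matrix (Fin r) (Fin r) ℂ) (v : Fin r → ℂ) :
    ‖A.mulVec v‖ ≤ (∑ i, ∑ j, ‖A i j‖) * ‖v‖ := by
  have hnn : (0:ℝ) ≤ (∑ i, ∑ j, ‖A i j‖) * ‖v‖ :=
    mul_nonneg (Finset.sum_nonneg fun i _ => Finset.sum_nonneg fun j _ => norm_nonneg _)
      (norm_nonneg _)
  rw [pi_norm_le_iff_of_nonneg hnn]
  intro i
  calc ‖A.mulVec v i‖ = ‖∑ j, A i j * v j‖ := by simp [Matrix.mulVec, dotProduct]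
    _ ≤ ∑ j, ‖A i j * v j‖ := norm_sum_le _ _
    _ = ∑ j, ‖A i j‖ * ‖v j‖ := by simp [norm_mul]
    _ ≤ ∑ j, ‖A i j‖ * ‖v‖ := Finset.sum_le_sum fun j _ =>
        mul_le_mul_of_nonneg_left (norm_le_pi_norm v j) (norm_nonneg _)
    _ = (∑ j, ‖A i j‖) * ‖v‖ := (Finset.sum_mul _ _ _).symm
    _ ≤ (∑ i, ∑ j, ‖A i j‖) * ‖v‖ := mul_le_mul_of_nonneg_right
        (Finset.single_le_sum (f := fun i => ∑ j, ‖A i j‖)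
          (fun i _ => Finset.sum_nonneg fun j _ => norm_nonneg _) (Finset.mem_univ i))
        (norm_nonneg _)

private lemma aux_cont_mulVec {r : ℕ} {Y : ℝ → Matrix (Fin r) (Fin r) ℂ}
    (hY : ∀ i j, ContinuousOn (fun x => Y x i j) (Set.Ici 0)) {g : ℝ → Fin r → ℂ}
    (hg : ContinuousOn g (Set.Ici 0)) :
    ContinuousOn (fun x => (Y x).mulVec (g x)) (Set.Ici 0) := by
  rw [continuousOn_pi]
  intro i
  simp only [Matrix.mulVec, dotProduct]
  exact continuousOn_finset_sum _ fun j _ =>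
    (hY i j).mul ((continuous_apply j).comp_continuousOn hg)

private lemma aux_unique {r : ℕ} {Y : ℝ → Matrix (Fin r) (Fin r) ℂ}
    (hY : ∀ i j, ContinuousOn (fun x => Y x i j) (Set.Ici 0))
    {W : Matrix (Fin r) (Fin r) ℂ} {Λ : ℂ} {f : ℝ → Fin r → ℂ}
    (hneg : ∀ x : ℝ, x < 0 → f x = 0)
    (hC1 : ContDiffOn ℝ 1 f (Set.Ici 0))
    (heq : ∀ x : ℝ, 0 ≤ x → derivWithin f (Set.Ici 0) x =
        W.mulVec (f 0) + (Y x).mulVec (f x)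
          - (∫ t in (0:ℝ)..x, (Y t).mulVec (derivWithin f (Set.Ici 0) t))
          - Λ • (∫ t in (0:ℝ)..x, f t))
    (h0 : f 0 = 0) : f = 0 := by
  set g : ℝ → Fin r → ℂ := derivWithin f (Set.Ici 0) with hgdef
  have hfc : ContinuousOn f (Set.Ici 0) := hC1.continuousOn
  have hgc : ContinuousOn g (Set.Ici 0) :=
    hC1.continuousOn_derivWithin (uniqueDiffOn_Ici 0) le_rfl
  have hYg : ContinuousOn (fun x => (Y x).mulVec (g x)) (Set.Ici 0) := aux_cont_mulVec hY hgc
  have hYf : ContinuousOn (fun x => (Y x).mulVec (f x)) (Set.Ici 0) := aux_cont_mulVec hY hfc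
  set v : ℝ → Fin r → ℂ :=
    fun x => (∫ t in (0:ℝ)..x, (Y t).mulVec (g t)) + Λ • (∫ t in (0:ℝ)..x, f t) with hvdef
  have heq' : ∀ x : ℝ, 0 ≤ x → g x = (Y x).mulVec (f x) - v x := by
    intro x hx
    rw [heq x hx, h0, Matrix.mulVec_zero]
    simp only [hvdef]
    abel
  have hI1 : ∀ t : ℝ, 0 ≤ t → IntervalIntegrable (fun s => (Y s).mulVec (g s)) volume 0 t :=
    fun t ht => (hYg.mono (by rw [Set.uIcc_of_le ht]; exact Set.Icc_subset_Ici_self)).intervalIntegrable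
  have hI2 : ∀ t : ℝ, 0 ≤ t → IntervalIntegrable f volume 0 t :=
    fun t ht => (hfc.mono (by rw [Set.uIcc_of_le ht]; exact Set.Icc_subset_Ici_self)).intervalIntegrable
  have hv' : ∀ t : ℝ, 0 ≤ t →
      HasDerivWithinAt v ((Y t).mulVec (g t) + Λ • f t) (Set.Ici t) t := by
    intro t ht
    have hsub : Set.Ici t ⊆ Set.Ici (0:ℝ) := Set.Ici_subset_Ici.mpr ht
    have hmem : Set.Ici t ∈ nhdsWithin t (Set.Ioi t) :=
      Filter.mem_of_superset self_mem_nhdsWithin Set.Ioi_subset_Ici_self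
    have m1 : StronglyMeasurableAtFilter (fun s => (Y s).mulVec (g s)) (nhdsWithin t (Set.Ioi t)) volume :=
      ⟨Set.Ici t, hmem, ((hYg.mono hsub).aestronglyMeasurable measurableSet_Ici)⟩
    have m2 : StronglyMeasurableAtFilter f (nhdsWithin t (Set.Ioi t)) volume :=
      ⟨Set.Ici t, hmem, ((hfc.mono hsub).aestronglyMeasurable measurableSet_Ici)⟩
    have c1 : ContinuousWithinAt (fun s => (Y s).mulVec (g s)) (Set.Ioi t) t :=
      ((hYg t ht).mono hsub).mono Set.Ioi_subset_Ici_self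
    have c2 : ContinuousWithinAt f (Set.Ioi t) t :=
      ((hfc t ht).mono hsub).mono Set.Ioi_subset_Ici_self
    have d1 := intervalIntegral.integral_hasDerivWithinAt_right (s := Set.Ici t) (t := Set.Ioi t) (hI1 t ht) m1 c1
    have d2 := intervalIntegral.integral_hasDerivWithinAt_right (s := Set.Ici t) (t := Set.Ioi t) (hI2 t ht) m2 c2
    exact d1.add (d2.const_smul Λ)
  have hf' : ∀ t : ℝ, 0 ≤ t → HasDerivWithinAt f (g t) (Set.Ici t) t := fun t ht =>
    ((hC1.differentiableOn one_ne_zero t ht).hasDerivWithinAt).mono (Set.Ici_subset_Ici.mpr ht)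
  funext x
  rcases lt_or_ge x 0 with hx | hx
  · simpa using hneg x hx
  -- bound on Y over [0, x]
  have hNc : ContinuousOn (fun t => ∑ i, ∑ j, ‖Y t i j‖) (Set.Ici 0) :=
    continuousOn_finset_sum _ fun i _ => continuousOn_finset_sum _ fun j _ => (hY i j).norm
  obtain ⟨C, hC⟩ := (isCompact_Icc (a := (0:ℝ)) (b := x)).exists_bound_of_continuousOn
    (hNc.mono Set.Icc_subset_Ici_self)
  have hN : ∀ t ∈ Set.Icc (0:ℝ) x, (∑ i, ∑ j, ‖Y t i j‖) ≤ C := fun t ht =>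
    (le_abs_self _).trans (by simpa [Real.norm_eq_abs] using hC t ht)
  have hC0 : 0 ≤ C :=
    le_trans (Finset.sum_nonneg fun i _ => Finset.sum_nonneg fun j _ => norm_nonneg _)
      (hN 0 ⟨le_rfl, hx⟩)
  set K : ℝ := C * (C + 1) + ‖Λ‖ + (C + 1) with hKdef
  set u : ℝ → (Fin r → ℂ) × (Fin r → ℂ) := fun z => (f z, v z) with hudef
  have hu0 : u 0 = 0 := by
    have : v 0 = 0 := by simp [hvdef]
    simp [hudef, h0, this, Prod.ext_iff]
  have hvc : ContinuousOn v (Set.Icc 0 x) := by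
    have e1 : ContinuousOn (fun z => ∫ t in (0:ℝ)..z, (Y t).mulVec (g t)) (Set.Icc 0 x) := by
      have := intervalIntegral.continuousOn_primitive_interval (a := (0:ℝ)) (b := x)
        (f := fun t => (Y t).mulVec (g t)) (μ := volume) ?_
      · rwa [Set.uIcc_of_le hx] at this
      · rw [Set.uIcc_of_le hx]
        exact (hYg.mono Set.Icc_subset_Ici_self).integrableOn_compact isCompact_Icc
    have e2 : ContinuousOn (fun z => ∫ t in (0:ℝ)..z, f t) (Set.Icc 0 x) := by
      have := intervalIntegral.continuousOn_primitive_interval (a := (0:ℝ)) (b := x)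
        (f := f) (μ := volume) ?_
      · rwa [Set.uIcc_of_le hx] at this
      · rw [Set.uIcc_of_le hx]
        exact (hfc.mono Set.Icc_subset_Ici_self).integrableOn_compact isCompact_Icc
    exact e1.add (e2.const_smul Λ)
  have hucont : ContinuousOn u (Set.Icc 0 x) :=
    (hfc.mono Set.Icc_subset_Ici_self).prodMk hvc
  have hu' : ∀ t ∈ Set.Ico (0:ℝ) x,
      HasDerivWithinAt u (g t, (Y t).mulVec (g t) + Λ • f t) (Set.Ici t) t :=
    fun t ht => (hf' t ht.1).prodMk (hv' t ht.1)
  have hbound : ∀ t ∈ Set.Ico (0:ℝ) x,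
      ‖(g t, (Y t).mulVec (g t) + Λ • f t)‖ ≤ K * ‖u t‖ + 0 := by
    intro t ht
    have h1 : ‖f t‖ ≤ ‖u t‖ := norm_fst_le (u t)
    have h2 : ‖v t‖ ≤ ‖u t‖ := norm_snd_le (u t)
    have hNt : (∑ i, ∑ j, ‖Y t i j‖) ≤ C := hN t ⟨ht.1, ht.2.le⟩
    have hNt0 : 0 ≤ (∑ i, ∑ j, ‖Y t i j‖) :=
      Finset.sum_nonneg fun i _ => Finset.sum_nonneg fun j _ => norm_nonneg _
    have hgt : ‖g t‖ ≤ (C + 1) * ‖u t‖ := by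
      rw [heq' t ht.1]
      calc ‖(Y t).mulVec (f t) - v t‖ ≤ ‖(Y t).mulVec (f t)‖ + ‖v t‖ := norm_sub_le _ _
        _ ≤ (∑ i, ∑ j, ‖Y t i j‖) * ‖f t‖ + ‖v t‖ :=
            add_le_add_left (aux_norm_mulVec _ _) _
        _ ≤ C * ‖u t‖ + ‖u t‖ :=
            add_le_add (mul_le_mul hNt h1 (norm_nonneg _) hC0) h2
        _ = (C + 1) * ‖u t‖ := by ring
    have hsnd : ‖(Y t).mulVec (g t) + Λ • f t‖ ≤ (C * (C + 1) + ‖Λ‖) * ‖u t‖ := by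
      calc ‖(Y t).mulVec (g t) + Λ • f t‖ ≤ ‖(Y t).mulVec (g t)‖ + ‖Λ • f t‖ := norm_add_le _ _
        _ = ‖(Y t).mulVec (g t)‖ + ‖Λ‖ * ‖f t‖ := by rw [norm_smul]
        _ ≤ (∑ i, ∑ j, ‖Y t i j‖) * ‖g t‖ + ‖Λ‖ * ‖f t‖ :=
            add_le_add_left (aux_norm_mulVec _ _) _
        _ ≤ C * ((C + 1) * ‖u t‖) + ‖Λ‖ * ‖u t‖ :=
            add_le_add (mul_le_mul hNt hgt (norm_nonneg _) hC0)
              (mul_le_mul_of_nonneg_left h1 (norm_nonneg _))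
        _ = (C * (C + 1) + ‖Λ‖) * ‖u t‖ := by ring
    rw [Prod.norm_def]
    rw [add_zero]
    apply max_le
    · calc ‖g t‖ ≤ (C + 1) * ‖u t‖ := hgt
        _ ≤ K * ‖u t‖ := by
            apply mul_le_mul_of_nonneg_right _ (norm_nonneg _)
            rw [hKdef]; nlinarith [norm_nonneg Λ]
    · calc ‖(Y t).mulVec (g t) + Λ • f t‖ ≤ (C * (C + 1) + ‖Λ‖) * ‖u t‖ := hsnd
        _ ≤ K * ‖u t‖ := by
            apply mul_le_mul_of_nonneg_right _ (norm_nonneg _)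
            rw [hKdef]; nlinarith
  have hg := norm_le_gronwallBound_of_norm_deriv_right_le (δ := 0) (K := K) (ε := 0)
    hucont hu' (by rw [hu0]; simp) hbound
  have hx0 : ‖u x‖ ≤ 0 := by
    have := hg x ⟨hx, le_rfl⟩
    rwa [gronwallBound_ε0_δ0] at this
  have : ‖f x‖ ≤ 0 := le_trans (norm_fst_le (u x)) hx0
  simpa using norm_le_zero_iff.mp this

private lemma aux_rank {r : ℕ} {Y : ℝ → Matrix (Fin r) (Fin r) ℂ}
    (hY : ∀ i j : Fin r, ContinuousOn (fun x => Y x i j) (Set.Ici 0))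
    {W : Matrix (Fin r) (Fin r) ℂ} {Λ : ℂ} (S : Submodule ℂ (ℝ → (Fin r → ℂ)))
    (hS : (S : Set (ℝ → (Fin r → ℂ))) =
        {f | (∀ x : ℝ, x < 0 → f x = 0) ∧ ContDiffOn ℝ 1 f (Set.Ici 0) ∧
          ∀ x : ℝ, 0 ≤ x → derivWithin f (Set.Ici 0) x =
            W.mulVec (f 0) + (Y x).mulVec (f x)
              - (∫ t in (0:ℝ)..x, (Y t).mulVec (derivWithin f (Set.Ici 0) t))
              - Λ • (∫ t in (0:ℝ)..x, f t)}) :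
    Module.rank ℂ S ≤ r := by
  let φ : S →ₗ[ℂ] (Fin r → ℂ) :=
    (LinearMap.proj (R := ℂ) (φ := fun _ : ℝ => Fin r → ℂ) (0:ℝ)).comp S.subtype
  have hinj : Function.Injective φ := by
    rw [injective_iff_map_eq_zero]
    intro a ha
    have hm : (a : ℝ → (Fin r → ℂ)) ∈ (S : Set (ℝ → (Fin r → ℂ))) := a.2
    rw [hS] at hm
    obtain ⟨h1, h2, h3⟩ := hm
    have h0 : (a : ℝ → (Fin r → ℂ)) 0 = 0 := ha
    have := aux_unique hY h1 h2 h3 h0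
    exact Subtype.ext (by rw [this]; rfl)
  calc Module.rank ℂ S ≤ Module.rank ℂ (Fin r → ℂ) := φ.rank_le_of_injective hinj
    _ = r := by rw [rank_fin_fun]

/-- **Eigenspaces are at most `r`-dimensional (Lemma 3.7 / `l.one`).**
Functions on `[0,∞)` are modelled as functions on `ℝ` vanishing on `(-∞,0)`.  The set of
(continuously differentiable on `[0,∞)`) solutions of the integrated eigenvalue equation
`f'(x) = W f(0) + Y(x) f(x) − ∫₀ˣ Y f' − Λ ∫₀ˣ f` is a complex subspace of dimension at
most `r`. -/
theorem stmt_7 {r : ℕ} (hr : 1 ≤ r)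
    (Y : ℝ → Matrix (Fin r) (Fin r) ℂ)
    (hY : ∀ i j : Fin r, ContinuousOn (fun x => Y x i j) (Set.Ici 0))
    (W : Matrix (Fin r) (Fin r) ℂ) (Λ : ℂ) :
    ∃ S : Submodule ℂ (ℝ → (Fin r → ℂ)),
      (S : Set (ℝ → (Fin r → ℂ))) =
        {f | (∀ x : ℝ, x < 0 → f x = 0) ∧ ContDiffOn ℝ 1 f (Set.Ici 0) ∧
          ∀ x : ℝ, 0 ≤ x → derivWithin f (Set.Ici 0) x =
            W.mulVec (f 0) + (Y x).mulVec (f x)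
              - (∫ t in (0:ℝ)..x, (Y t).mulVec (derivWithin f (Set.Ici 0) t))
              - Λ • (∫ t in (0:ℝ)..x, f t)} ∧
      Module.rank ℂ S ≤ r := by
  set A : Set (ℝ → (Fin r → ℂ)) :=
    {f | (∀ x : ℝ, x < 0 → f x = 0) ∧ ContDiffOn ℝ 1 f (Set.Ici 0) ∧
      ∀ x : ℝ, 0 ≤ x → derivWithin f (Set.Ici 0) x =
        W.mulVec (f 0) + (Y x).mulVec (f x)
          - (∫ t in (0:ℝ)..x, (Y t).mulVec (derivWithin f (Set.Ici 0) t))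
          - Λ • (∫ t in (0:ℝ)..x, f t)} with hA
  have hzero : (0 : ℝ → (Fin r → ℂ)) ∈ A := by
    refine ⟨fun x _ => rfl, contDiffOn_const, fun x hx => ?_⟩
    have hz : ∀ t : ℝ, 0 ≤ t →
        derivWithin (0 : ℝ → (Fin r → ℂ)) (Set.Ici 0) t = 0 := fun t ht =>
      congrFun (derivWithin_const (Set.Ici 0) (0 : Fin r → ℂ)) t
    rw [hz x hx]
    have : (∫ t in (0:ℝ)..x, (Y t).mulVec (derivWithin (0 : ℝ → (Fin r → ℂ)) (Set.Ici 0) t))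
        = ∫ t in (0:ℝ)..x, (0 : Fin r → ℂ) := by
      apply intervalIntegral.integral_congr
      intro t ht
      rw [Set.uIcc_of_le hx] at ht
      simp only [hz t ht.1, Matrix.mulVec_zero]
    rw [this]
    simp
  -- derivative facts for members
  have hdiff : ∀ f ∈ A, ∀ x ∈ Set.Ici (0:ℝ),
      DifferentiableWithinAt ℝ f (Set.Ici 0) x := fun f hf x hx =>
    hf.2.1.differentiableOn one_ne_zero x hx
  have hgc : ∀ f ∈ A, ContinuousOn (derivWithin f (Set.Ici 0)) (Set.Ici 0) := fun f hf =>
    hf.2.1.continuousOn_derivWithin (uniqueDiffOn_Ici 0) le_rfl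
  have hint1 : ∀ f ∈ A, ∀ x : ℝ, 0 ≤ x →
      IntervalIntegrable (fun t => (Y t).mulVec (derivWithin f (Set.Ici 0) t)) volume 0 x :=
    fun f hf x hx => ((aux_cont_mulVec hY (hgc f hf)).mono
      (by rw [Set.uIcc_of_le hx]; exact Set.Icc_subset_Ici_self)).intervalIntegrable
  have hint2 : ∀ f ∈ A, ∀ x : ℝ, 0 ≤ x → IntervalIntegrable f volume 0 x :=
    fun f hf x hx => (hf.2.1.continuousOn.mono
      (by rw [Set.uIcc_of_le hx]; exact Set.Icc_subset_Ici_self)).intervalIntegrable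
  have hadd : ∀ f ∈ A, ∀ g ∈ A, f + g ∈ A := by
    intro f hf g hg
    refine ⟨fun x hx => by simp [hf.1 x hx, hg.1 x hx],
      hf.2.1.add hg.2.1, fun x hx => ?_⟩
    have hd : derivWithin (f + g) (Set.Ici 0) x =
        derivWithin f (Set.Ici 0) x + derivWithin g (Set.Ici 0) x := by
      rw [show f + g = fun y => f y + g y from rfl]
      exact derivWithin_add (hdiff f hf x hx) (hdiff g hg x hx)
    have hdall : ∀ t : ℝ, 0 ≤ t → derivWithin (f + g) (Set.Ici 0) t =
        derivWithin f (Set.Ici 0) t + derivWithin g (Set.Ici 0) t := by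
      intro t ht
      rw [show f + g = fun y => f y + g y from rfl]
      exact derivWithin_add (hdiff f hf t ht) (hdiff g hg t ht)
    rw [hd, hf.2.2 x hx, hg.2.2 x hx]
    have hI : (∫ t in (0:ℝ)..x, (Y t).mulVec (derivWithin (f + g) (Set.Ici 0) t))
        = (∫ t in (0:ℝ)..x, (Y t).mulVec (derivWithin f (Set.Ici 0) t))
          + ∫ t in (0:ℝ)..x, (Y t).mulVec (derivWithin g (Set.Ici 0) t) := by
      rw [← intervalIntegral.integral_add (hint1 f hf x hx) (hint1 g hg x hx)]
      apply intervalIntegral.integral_congr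
      intro t ht
      rw [Set.uIcc_of_le hx] at ht
      simp only [hdall t ht.1, Matrix.mulVec_add]
    have hJ : (∫ t in (0:ℝ)..x, (f + g) t)
        = (∫ t in (0:ℝ)..x, f t) + ∫ t in (0:ℝ)..x, g t := by
      rw [← intervalIntegral.integral_add (hint2 f hf x hx) (hint2 g hg x hx)]; rfl
    rw [hI, hJ]
    simp only [Pi.add_apply, Matrix.mulVec_add, smul_add]
    abel
  have hsmul : ∀ (c : ℂ), ∀ f ∈ A, c • f ∈ A := by
    intro c f hf
    refine ⟨fun x hx => by simp [hf.1 x hx],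
      hf.2.1.const_smul c, fun x hx => ?_⟩
    have hdall : ∀ t : ℝ, 0 ≤ t → derivWithin (c • f) (Set.Ici 0) t =
        c • derivWithin f (Set.Ici 0) t := by
      intro t ht
      rw [show c • f = fun y => c • f y from rfl]
      exact derivWithin_fun_const_smul c (hdiff f hf t ht)
    rw [hdall x hx, hf.2.2 x hx]
    have hI : (∫ t in (0:ℝ)..x, (Y t).mulVec (derivWithin (c • f) (Set.Ici 0) t))
        = c • ∫ t in (0:ℝ)..x, (Y t).mulVec (derivWithin f (Set.Ici 0) t) := by
      rw [← intervalIntegral.integral_smul]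
      apply intervalIntegral.integral_congr
      intro t ht
      rw [Set.uIcc_of_le hx] at ht
      simp only [hdall t ht.1, Matrix.mulVec_smul]
    have hJ : (∫ t in (0:ℝ)..x, (c • f) t) = c • ∫ t in (0:ℝ)..x, f t := by
      rw [← intervalIntegral.integral_smul]; rfl
    rw [hI, hJ]
    simp only [Pi.smul_apply, Matrix.mulVec_smul, smul_sub, smul_add, smul_comm c Λ]
  refine ⟨{ carrier := A, add_mem' := fun ha hb => hadd _ ha _ hb,
            zero_mem' := hzero, smul_mem' := fun c f hf => hsmul c f hf }, rfl, ?_⟩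
  exact aux_rank hY _ rfl
end

section
/- Let r ≥ 1, m > 0, and let v : ℕ → ℂ^r have finite support. Define ‖v‖² = m^{-1} Σ_{j≥0} |v_j|² and ‖Dv‖² = m^{-1} Σ_{j≥0} |m(v_{j+1} − v_j)|², where |·| is the Euclidean norm on ℂ^r. Then |v_0|² ≤ 2·‖Dv‖·‖v‖. -/
/-- **Discrete boundary estimate (from the proof of Lemma 3.11 / `l.dbound`).**
For a finitely supported sequence `v : ℕ → ℂ^r` and the `m⁻¹`-weighted `ℓ²` norms
`‖v‖² = m⁻¹ Σ |v_j|²`, `‖Dv‖² = m⁻¹ Σ |m (v_{j+1} − v_j)|²`, one has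
`|v₀|² ≤ 2 ‖Dv‖ ‖v‖`. -/
theorem stmt_9 {r : ℕ} (hr : 1 ≤ r) (m : ℝ) (hm : 0 < m)
    (v : ℕ → EuclideanSpace ℂ (Fin r)) (hv : (Function.support v).Finite) :
    ‖v 0‖ ^ 2 ≤
      2 * Real.sqrt (m⁻¹ * ∑' j : ℕ, ‖m • (v (j + 1) - v j)‖ ^ 2)
        * Real.sqrt (m⁻¹ * ∑' j : ℕ, ‖v j‖ ^ 2) := by
  -- find N beyond which v vanishes
  obtain ⟨N, hN⟩ : ∃ N : ℕ, ∀ j, N ≤ j → v j = 0 := by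
    obtain ⟨M, hM⟩ := hv.bddAbove
    refine ⟨M + 1, fun j hj => ?_⟩
    by_contra h
    exact absurd (hM (Function.mem_support.mpr h)) (by omega)
  set A : ℝ := ∑ j ∈ Finset.range N, ‖v (j + 1) - v j‖ ^ 2 with hA
  set B : ℝ := ∑ j ∈ Finset.range N, ‖v j‖ ^ 2 with hB
  have hAnn : 0 ≤ A := Finset.sum_nonneg fun _ _ => by positivity
  have hBnn : 0 ≤ B := Finset.sum_nonneg fun _ _ => by positivity
  -- identify the tsums
  have h1 : ∑' j : ℕ, ‖m • (v (j + 1) - v j)‖ ^ 2 = m ^ 2 * A := by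
    have hz : ∀ j ∉ Finset.range N, ‖m • (v (j + 1) - v j)‖ ^ 2 = 0 := by
      intro j hj
      have hj' : N ≤ j := by simpa using hj
      rw [hN _ hj', hN _ (by omega), sub_zero, smul_zero, norm_zero]
      ring
    rw [tsum_eq_sum hz, hA, Finset.mul_sum]
    refine Finset.sum_congr rfl fun j _ => ?_
    rw [norm_smul, Real.norm_eq_abs, abs_of_pos hm, mul_pow]
  have h2 : ∑' j : ℕ, ‖v j‖ ^ 2 = B := by
    rw [hB, ← tsum_eq_sum (L := SummationFilter.unconditional ℕ) (s := Finset.range N) (f := fun j => ‖v j‖ ^ 2)]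
    intro j hj
    rw [hN j (by simpa using hj), norm_zero]
    ring
  rw [h1, h2]
  have hsq : Real.sqrt (m⁻¹ * (m ^ 2 * A)) * Real.sqrt (m⁻¹ * B)
      = Real.sqrt A * Real.sqrt B := by
    rw [← Real.sqrt_mul (by positivity), ← Real.sqrt_mul (by positivity)]
    congr 1
    field_simp
  rw [mul_assoc, hsq, ← mul_assoc]
  -- telescoping
  have htel : ‖v 0‖ ^ 2 = ∑ j ∈ Finset.range N, (‖v j‖ ^ 2 - ‖v (j + 1)‖ ^ 2) := by
    rw [Finset.sum_range_sub' (f := fun j => ‖v j‖ ^ 2), hN N le_rfl, norm_zero]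
    ring
  have hstep : ∀ j, ‖v j‖ ^ 2 - ‖v (j + 1)‖ ^ 2
      ≤ ‖v (j + 1) - v j‖ * (‖v j‖ + ‖v (j + 1)‖) := by
    intro j
    have h3 : ‖v j‖ - ‖v (j + 1)‖ ≤ ‖v (j + 1) - v j‖ := by
      have := norm_sub_norm_le (v j) (v (j + 1))
      rw [← norm_neg (v j - v (j + 1))] at this
      simpa [neg_sub] using this
    calc ‖v j‖ ^ 2 - ‖v (j + 1)‖ ^ 2
        = (‖v j‖ - ‖v (j + 1)‖) * (‖v j‖ + ‖v (j + 1)‖) := by ring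
      _ ≤ ‖v (j + 1) - v j‖ * (‖v j‖ + ‖v (j + 1)‖) :=
          mul_le_mul_of_nonneg_right h3 (by positivity)
  have hCS : ∑ j ∈ Finset.range N, ‖v (j + 1) - v j‖ * (‖v j‖ + ‖v (j + 1)‖)
      ≤ Real.sqrt A * Real.sqrt (∑ j ∈ Finset.range N, (‖v j‖ + ‖v (j + 1)‖) ^ 2) :=
    Real.sum_mul_le_sqrt_mul_sqrt _ _ _
  have hC : ∑ j ∈ Finset.range N, (‖v j‖ + ‖v (j + 1)‖) ^ 2 ≤ 4 * B := by
    have hshift : ∑ j ∈ Finset.range N, ‖v (j + 1)‖ ^ 2 ≤ B := by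
      have : ∑ j ∈ Finset.range N, ‖v (j + 1)‖ ^ 2
          = ∑ j ∈ Finset.range (N + 1), ‖v j‖ ^ 2 - ‖v 0‖ ^ 2 := by
        rw [Finset.sum_range_succ' (f := fun j => ‖v j‖ ^ 2)]
        ring
      rw [this, Finset.sum_range_succ, hN N le_rfl, norm_zero]
      have : (0:ℝ) ≤ ‖v 0‖ ^ 2 := by positivity
      simp only [hB]
      nlinarith
    calc ∑ j ∈ Finset.range N, (‖v j‖ + ‖v (j + 1)‖) ^ 2
        ≤ ∑ j ∈ Finset.range N, (2 * ‖v j‖ ^ 2 + 2 * ‖v (j + 1)‖ ^ 2) := by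
          refine Finset.sum_le_sum fun j _ => ?_
          nlinarith [sq_nonneg (‖v j‖ - ‖v (j + 1)‖)]
      _ = 2 * B + 2 * ∑ j ∈ Finset.range N, ‖v (j + 1)‖ ^ 2 := by
          rw [Finset.sum_add_distrib, ← Finset.mul_sum, ← Finset.mul_sum]
      _ ≤ 4 * B := by linarith
  calc ‖v 0‖ ^ 2 = ∑ j ∈ Finset.range N, (‖v j‖ ^ 2 - ‖v (j + 1)‖ ^ 2) := htel
    _ ≤ ∑ j ∈ Finset.range N, ‖v (j + 1) - v j‖ * (‖v j‖ + ‖v (j + 1)‖) :=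
        Finset.sum_le_sum fun j _ => hstep j
    _ ≤ Real.sqrt A * Real.sqrt (∑ j ∈ Finset.range N, (‖v j‖ + ‖v (j + 1)‖) ^ 2) := hCS
    _ ≤ Real.sqrt A * Real.sqrt (4 * B) :=
        mul_le_mul_of_nonneg_left (Real.sqrt_le_sqrt hC) (Real.sqrt_nonneg _)
    _ = 2 * Real.sqrt A * Real.sqrt B := by
        rw [Real.sqrt_mul (by norm_num), show Real.sqrt 4 = 2 by
          rw [show (4:ℝ) = 2 ^ 2 by norm_num, Real.sqrt_sq (by norm_num)]]
        ring
end

section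
/- For every real α > 0 one has √2·Γ((α+1)/2)/Γ(α/2) ≤ √α, and for every real α ≥ 1 one has √(α−1) ≤ √2·Γ((α+1)/2)/Γ(α/2). (Equivalently, the mean of a chi-distributed random variable with parameter α, which equals √2·Γ((α+1)/2)/Γ(α/2), satisfies √((α−1)⁺) ≤ E χ_α ≤ √α.) -/
open Real

lemma key_gamma_half (x : ℝ) (hx : 0 < x) :
    Real.Gamma (x + 1/2) ≤ Real.sqrt x * Real.Gamma x := by
  have h := Real.Gamma_mul_add_mul_le_rpow_Gamma_mul_rpow_Gamma
    hx (by linarith : (0:ℝ) < x + 1) (by norm_num : (0:ℝ) < 1/2)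
    (by norm_num : (0:ℝ) < 1/2) (by norm_num : (1/2:ℝ) + 1/2 = 1)
  have heq : (1/2:ℝ) * x + 1/2 * (x + 1) = x + 1/2 := by ring
  rw [heq] at h
  have hG : 0 < Real.Gamma x := Real.Gamma_pos_of_pos hx
  have hA : Real.Gamma (x + 1) = x * Real.Gamma x := Real.Gamma_add_one hx.ne'
  calc Real.Gamma (x + 1/2) ≤ Real.Gamma x ^ (1/2:ℝ) * Real.Gamma (x+1) ^ (1/2:ℝ) := h
    _ = Real.sqrt (Real.Gamma x) * Real.sqrt (x * Real.Gamma x) := by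
        rw [hA, ← Real.sqrt_eq_rpow, ← Real.sqrt_eq_rpow]
    _ = Real.sqrt x * Real.Gamma x := by
        rw [Real.sqrt_mul hx.le, ← mul_assoc, mul_comm (Real.sqrt (Real.Gamma x)),
          mul_assoc, Real.mul_self_sqrt hG.le]

/-- **Chi-distribution mean bounds (equation (4.3) / `chi`).**
The mean `√2 Γ((α+1)/2)/Γ(α/2)` of a chi-distributed random variable with parameter `α`
satisfies `√((α−1)⁺) ≤ E χ_α ≤ √α`: the upper bound holds for all `α > 0`, and the lower
bound `√(α−1) ≤ E χ_α` holds for all `α ≥ 1`. -/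
theorem stmt_11 :
    (∀ α : ℝ, 0 < α →
      Real.sqrt 2 * Real.Gamma ((α + 1) / 2) / Real.Gamma (α / 2) ≤ Real.sqrt α) ∧
    (∀ α : ℝ, 1 ≤ α →
      Real.sqrt (α - 1) ≤ Real.sqrt 2 * Real.Gamma ((α + 1) / 2) / Real.Gamma (α / 2)) := by
  constructor
  · intro α hα
    have hx : (0:ℝ) < α / 2 := by linarith
    have hG : 0 < Real.Gamma (α / 2) := Real.Gamma_pos_of_pos hx
    have h := key_gamma_half (α / 2) hx
    have heq : α / 2 + 1/2 = (α + 1) / 2 := by ring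
    rw [heq] at h
    rw [div_le_iff₀ hG]
    calc Real.sqrt 2 * Real.Gamma ((α + 1) / 2)
        ≤ Real.sqrt 2 * (Real.sqrt (α/2) * Real.Gamma (α/2)) := by
          apply mul_le_mul_of_nonneg_left h (Real.sqrt_nonneg 2)
      _ = Real.sqrt α * Real.Gamma (α / 2) := by
          rw [← mul_assoc, ← Real.sqrt_mul (by norm_num : (0:ℝ) ≤ 2), mul_div_cancel₀]
          norm_num
  · intro α hα
    rcases eq_or_lt_of_le hα with h1 | h1
    · rw [← h1]
      simp only [sub_self, Real.sqrt_zero]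
      have hG : 0 < Real.Gamma ((1:ℝ) / 2) := Real.Gamma_pos_of_pos (by norm_num)
      have hG2 : 0 < Real.Gamma (((1:ℝ) + 1) / 2) := Real.Gamma_pos_of_pos (by norm_num)
      positivity
    · have hy : (0:ℝ) < (α - 1) / 2 := by linarith
      have h := key_gamma_half ((α - 1)/2) hy
      have heq : (α - 1)/2 + 1/2 = α / 2 := by ring
      rw [heq] at h
      have hGy : 0 < Real.Gamma ((α - 1)/2) := Real.Gamma_pos_of_pos hy
      have hGx : 0 < Real.Gamma (α / 2) := Real.Gamma_pos_of_pos (by linarith : (0:ℝ) < α/2)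
      have hrec : Real.Gamma ((α + 1)/2) = (α - 1)/2 * Real.Gamma ((α - 1)/2) := by
        have : (α + 1)/2 = (α - 1)/2 + 1 := by ring
        rw [this, Real.Gamma_add_one hy.ne']
      rw [le_div_iff₀ hGx]
      have hsy : 0 < Real.sqrt ((α - 1)/2) := Real.sqrt_pos.mpr hy
      calc Real.sqrt (α - 1) * Real.Gamma (α / 2)
          ≤ Real.sqrt (α - 1) * (Real.sqrt ((α - 1)/2) * Real.Gamma ((α - 1)/2)) := by
            apply mul_le_mul_of_nonneg_left h (Real.sqrt_nonneg _)
        _ = Real.sqrt 2 * ((α - 1)/2 * Real.Gamma ((α - 1)/2)) := by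
            rw [← mul_assoc, ← mul_assoc]
            congr 1
            have : Real.sqrt (α - 1) * Real.sqrt ((α - 1)/2)
                = Real.sqrt 2 * ((α - 1)/2) := by
              rw [← Real.sqrt_mul (by linarith : (0:ℝ) ≤ α - 1)]
              have h2 : (α - 1) * ((α - 1)/2) = 2 * ((α-1)/2)^2 := by ring
              rw [h2, Real.sqrt_mul (by norm_num : (0:ℝ) ≤ 2), Real.sqrt_sq hy.le]
            exact this
        _ = Real.sqrt 2 * Real.Gamma ((α + 1) / 2) := by rw [hrec]
end

section
/- (Matrix Riccati equation.) Let r ≥ 1, λ ∈ ℝ, let B : [0,∞) → M_r(ℂ) be continuous, and let F, G : [0,∞) → M_r(ℂ) be differentiable with F'(x) = √2·B(x)F(x) + G(x) and G'(x) = (rx − λ)·F(x) − 2B(x)²F(x) − √2·B(x)G(x). Let I ⊆ [0,∞) be an interval on which F(x) is invertible, and set Q(x) = G(x)F(x)^{-1} for x ∈ I. Then Q is differentiable on I and satisfies Q'(x) = (rx − λ)·I_r − (Q(x) + √2·B(x))² for all x ∈ I. Moreover, if B(x) is Hermitian for all x and F(x₀)†G(x₀) is Hermitian at some x₀ ∈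 I, then Q(x) is Hermitian for all x ∈ I. -/
open Matrix

open Filter Set Topology
private lemma riccati_alg {r : ℕ} (c s : ℂ) (Bx Fx Gx Hx : Matrix (Fin r) (Fin r) ℂ)
    (hs : s * s = 2) (hFH : Fx * Hx = 1) (hHF : Hx * Fx = 1) :
    (c • Fx - (2:ℂ) • (Bx * Bx * Fx) - s • (Bx * Gx)) * Hx
      + Gx * (-(Hx * (s • (Bx * Fx) + Gx) * Hx))
    = c • (1 : Matrix (Fin r) (Fin r) ℂ) - (Gx * Hx + s • Bx) ^ 2 := by
  simp only [pow_two, mul_add, add_mul, mul_sub, sub_mul, mul_neg, neg_mul,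
    smul_mul_assoc, mul_smul_comm, smul_smul, smul_add, mul_assoc, hFH, hHF, mul_one, one_mul, hs]
  abel

private lemma wprime_alg {r : ℕ} (c s : ℂ) (Bx Fx Gx : Matrix (Fin r) (Fin r) ℂ)
    (hsc : star s = s) (hcc : star c = c) (hB : Bxᴴ = Bx) :
    ((s • (Bx * Fx) + Gx)ᴴ * Gx + Fxᴴ * (c • Fx - (2:ℂ) • (Bx * Bx * Fx) - s • (Bx * Gx)))
      - ((c • Fx - (2:ℂ) • (Bx * Bx * Fx) - s • (Bx * Gx))ᴴ * Fx + Gxᴴ * (s • (Bx * Fx) + Gx))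
      = 0 := by
  simp only [conjTranspose_add, conjTranspose_sub, conjTranspose_smul, conjTranspose_mul, hB,
    hsc, hcc, mul_add, add_mul, mul_sub, sub_mul, smul_mul_assoc, mul_smul_comm, mul_assoc]
  simp only [star_ofNat]
  abel

private lemma inv_entry_deriv {r : ℕ} {F : ℝ → Matrix (Fin r) (Fin r) ℂ} {I : Set ℝ}
    {F' : Matrix (Fin r) (Fin r) ℂ} {x : ℝ} (hx : x ∈ I)
    (hFd : ∀ i j, HasDerivWithinAt (fun t => F t i j) (F' i j) I x)
    (hFinv : ∀ y ∈ I, IsUnit (F y)) (i j : Fin r) :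
    HasDerivWithinAt (fun t => (F t)⁻¹ i j) ((-((F x)⁻¹ * F' * (F x)⁻¹)) i j) I x := by
  have hdet : ∀ y ∈ I, IsUnit (F y).det := fun y hy =>
    (Matrix.isUnit_iff_isUnit_det _).1 (hFinv y hy)
  have hFH : ∀ y ∈ I, F y * (F y)⁻¹ = 1 := fun y hy => Matrix.mul_nonsing_inv _ (hdet y hy)
  have hHF : ∀ y ∈ I, (F y)⁻¹ * F y = 1 := fun y hy => Matrix.nonsing_inv_mul _ (hdet y hy)
  have hFc : ContinuousWithinAt (fun t => F t) I x :=
    continuousWithinAt_pi.2 fun a => continuousWithinAt_pi.2 fun b => (hFd a b).continuousWithinAt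
  have hdetc : ContinuousWithinAt (fun t => (F t).det) I x :=
    (Continuous.matrix_det continuous_id).continuousAt.comp_continuousWithinAt hFc
  have hdetne : (F x).det ≠ 0 := by
    simpa using (hdet x hx).ne_zero
  have hHc : ∀ k l, ContinuousWithinAt (fun t => (F t)⁻¹ k l) I x := by
    intro k l
    have h1 : ContinuousWithinAt (fun t => ((F t).det)⁻¹ * (F t).adjugate k l) I x := by
      refine (hdetc.inv₀ hdetne).mul ?_
      exact ((Continuous.matrix_adjugate
        continuous_id).matrix_elem k l).continuousAt.comp_continuousWithinAt hFc
    refine h1.congr (fun t _ => ?_) ?_ <;>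
      simp [Matrix.inv_def, Ring.inverse_eq_inv', Matrix.smul_apply, smul_eq_mul]
  rw [hasDerivWithinAt_iff_tendsto_slope]
  have hslope : ∀ k l, Tendsto (slope (fun t => F t k l) x) (𝓝[I \ {x}] x) (𝓝 (F' k l)) :=
    fun k l => hasDerivWithinAt_iff_tendsto_slope.1 (hFd k l)
  have hT : Tendsto
      (fun t => ∑ k, ∑ l, (F t)⁻¹ i k * (-(slope (fun u => F u k l) x t)) * (F x)⁻¹ l j)
      (𝓝[I \ {x}] x)
      (𝓝 (∑ k, ∑ l, (F x)⁻¹ i k * (-(F' k l)) * (F x)⁻¹ l j)) := by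
    refine tendsto_finset_sum _ fun k _ => tendsto_finset_sum _ fun l _ => ?_
    exact ((((hHc i k).mono diff_subset).tendsto.mul (hslope k l).neg)).mul tendsto_const_nhds
  have hval : (∑ k, ∑ l, (F x)⁻¹ i k * (-(F' k l)) * (F x)⁻¹ l j)
      = (-((F x)⁻¹ * F' * (F x)⁻¹)) i j := by
    simp only [Matrix.neg_apply, Matrix.mul_apply, Finset.sum_mul, Finset.mul_sum,
      ← Finset.sum_neg_distrib]
    rw [Finset.sum_comm]
    refine Finset.sum_congr rfl fun l _ => Finset.sum_congr rfl fun k _ => by ring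
  rw [← hval]
  refine hT.congr' ?_
  filter_upwards [self_mem_nhdsWithin] with t ht
  obtain ⟨htI, htx⟩ := ht
  have hM : (F t)⁻¹ - (F x)⁻¹ = (F t)⁻¹ * (F x - F t) * (F x)⁻¹ := by
    rw [mul_sub, sub_mul, mul_assoc, hFH x hx, mul_one, hHF t htI, one_mul]
  have hentry : (F t)⁻¹ i j - (F x)⁻¹ i j
      = ∑ l, ∑ k, (F t)⁻¹ i k * (F x k l - F t k l) * (F x)⁻¹ l j := by
    have := congrFun (congrFun hM i) j
    simpa [Matrix.sub_apply, Matrix.mul_apply, Finset.sum_mul] using this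
  rw [slope_def_module, hentry, Finset.smul_sum, Finset.sum_comm]
  refine Finset.sum_congr rfl fun k _ => ?_
  rw [Finset.smul_sum]
  refine Finset.sum_congr rfl fun l _ => ?_
  simp only [slope_def_module, Matrix.sub_apply, smul_eq_mul, Complex.real_smul,
    Complex.ofReal_inv, Complex.ofReal_sub]
  ring

/-- **Matrix Riccati equation off the focal points.**
If `(F, G)` solves `F' = √2 B F + G`, `G' = (rx − λ)F − 2B²F − √2 B G` on `[0,∞)` and `F`
is invertible on an interval `I ⊆ [0,∞)`, then `Q = G F⁻¹` is differentiable on `I` with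
`Q' = (rx − λ)·1 − (Q + √2 B)²`; moreover, if `B` is Hermitian and `F(x₀)ᴴG(x₀)` is
Hermitian at some point `x₀ ∈ I`, then `Q` is Hermitian on `I`. -/
theorem stmt_13 {r : ℕ} (hr : 1 ≤ r) (lam : ℝ)
    (B F G : ℝ → Matrix (Fin r) (Fin r) ℂ)
    (hB_cont : ∀ i j : Fin r, ContinuousOn (fun x => B x i j) (Set.Ici 0))
    (hF : ∀ x : ℝ, 0 ≤ x → ∀ i j : Fin r,
      HasDerivWithinAt (fun t => F t i j)
        ((((Real.sqrt 2 : ℝ) : ℂ) • (B x * F x) + G x) i j) (Set.Ici 0) x)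
    (hG : ∀ x : ℝ, 0 ≤ x → ∀ i j : Fin r,
      HasDerivWithinAt (fun t => G t i j)
        ((((r * x - lam : ℝ) : ℂ) • F x - (2 : ℂ) • (B x * B x * F x)
          - ((Real.sqrt 2 : ℝ) : ℂ) • (B x * G x)) i j) (Set.Ici 0) x)
    (I : Set ℝ) (hI_sub : I ⊆ Set.Ici 0) (hI_conn : I.OrdConnected)
    (hFinv : ∀ x ∈ I, IsUnit (F x)) :
    (∀ x ∈ I, ∀ i j : Fin r,
      HasDerivWithinAt (fun t => (G t * (F t)⁻¹) i j)
        (((((r * x - lam : ℝ) : ℂ) • (1 : Matrix (Fin r) (Fin r) ℂ)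
          - (G x * (F x)⁻¹ + ((Real.sqrt 2 : ℝ) : ℂ) • B x) ^ 2) i j)) I x) ∧
    ((∀ x : ℝ, 0 ≤ x → (B x).IsHermitian) →
      (∃ x₀ ∈ I, ((F x₀)ᴴ * G x₀).IsHermitian) →
      ∀ x ∈ I, (G x * (F x)⁻¹).IsHermitian) := by
  have hs2 : ((Real.sqrt 2 : ℝ) : ℂ) * ((Real.sqrt 2 : ℝ) : ℂ) = 2 := by
    rw [← Complex.ofReal_mul, Real.mul_self_sqrt (by norm_num)]
    norm_num
  have hdet : ∀ y ∈ I, IsUnit (F y).det := fun y hy =>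
    (Matrix.isUnit_iff_isUnit_det _).1 (hFinv y hy)
  constructor
  · intro x hx i j
    set s : ℂ := ((Real.sqrt 2 : ℝ) : ℂ)
    set c : ℂ := ((r * x - lam : ℝ) : ℂ)
    set F'x := s • (B x * F x) + G x with hF'x
    set G'x := c • F x - (2:ℂ) • (B x * B x * F x) - s • (B x * G x) with hG'x
    have hH : ∀ k l, HasDerivWithinAt (fun t => (F t)⁻¹ k l)
        ((-((F x)⁻¹ * F'x * (F x)⁻¹)) k l) I x :=
      inv_entry_deriv hx (fun a b => (hF x (hI_sub hx) a b).mono hI_sub) hFinv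
    have hsum : HasDerivWithinAt (fun t => ∑ k, G t i k * (F t)⁻¹ k j)
        (∑ k, (G'x i k * (F x)⁻¹ k j + G x i k * (-((F x)⁻¹ * F'x * (F x)⁻¹)) k j)) I x := by
      refine HasDerivWithinAt.fun_sum fun k _ => ?_
      exact ((hG x (hI_sub hx) i k).mono hI_sub).mul (hH k j)
    refine HasDerivWithinAt.congr_deriv (hsum.congr (fun t _ => ?_) ?_) ?_
    · simp [Matrix.mul_apply]
    · simp [Matrix.mul_apply]
    · have hval : (∑ k, (G'x i k * (F x)⁻¹ k j + G x i k * (-((F x)⁻¹ * F'x * (F x)⁻¹)) k j))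
          = (G'x * (F x)⁻¹ + G x * (-((F x)⁻¹ * F'x * (F x)⁻¹))) i j := by
        simp [Matrix.mul_apply, Matrix.add_apply, Finset.sum_add_distrib]
      rw [hval, hG'x, hF'x,
        riccati_alg c s (B x) (F x) (G x) ((F x)⁻¹) hs2
          (Matrix.mul_nonsing_inv _ (hdet x hx)) (Matrix.nonsing_inv_mul _ (hdet x hx))]
  · rintro hBh ⟨x₀, hx₀, hherm⟩ x hx
    have hconv : Convex ℝ I := convex_iff_ordConnected.2 hI_conn
    have hWd : ∀ y ∈ I, ∀ i j : Fin r,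
        HasDerivWithinAt (fun t => ((F t)ᴴ * G t - (G t)ᴴ * F t) i j) 0 I y := by
      intro y hy i j
      set s : ℂ := ((Real.sqrt 2 : ℝ) : ℂ)
      set c : ℂ := ((r * y - lam : ℝ) : ℂ)
      set F'y := s • (B y * F y) + G y with hF'y
      set G'y := c • F y - (2:ℂ) • (B y * B y * F y) - s • (B y * G y) with hG'y
      have hFd : ∀ a b, HasDerivWithinAt (fun t => F t a b) (F'y a b) I y :=
        fun a b => (hF y (hI_sub hy) a b).mono hI_sub
      have hGd : ∀ a b, HasDerivWithinAt (fun t => G t a b) (G'y a b) I y :=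
        fun a b => (hG y (hI_sub hy) a b).mono hI_sub
      have hsum : HasDerivWithinAt
          (fun t => (∑ k, star (F t k i) * G t k j) - (∑ k, star (G t k i) * F t k j))
          ((∑ k, (star (F'y k i) * G y k j + star (F y k i) * G'y k j))
            - (∑ k, (star (G'y k i) * F y k j + star (G y k i) * F'y k j))) I y := by
      

        refine HasDerivWithinAt.sub ?_ ?_
        · exact HasDerivWithinAt.fun_sum fun k _ => ((hFd k i).star.mul (hGd k j))
        · exact HasDerivWithinAt.fun_sum fun k _ => ((hGd k i).star.mul (hFd k j))
      have hval : (∑ k, (star (F'y k i) * G y k j + star (F y k i) * G'y k j))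
            - (∑ k, (star (G'y k i) * F y k j + star (G y k i) * F'y k j))
          = ((F'yᴴ * G y + (F y)ᴴ * G'y) - (G'yᴴ * F y + (G y)ᴴ * F'y)) i j := by
        simp [Matrix.mul_apply, Matrix.conjTranspose_apply, Matrix.add_apply, Matrix.sub_apply,
          Finset.sum_add_distrib]
      have hzero : (F'yᴴ * G y + (F y)ᴴ * G'y) - (G'yᴴ * F y + (G y)ᴴ * F'y) = 0 := by
        rw [hF'y, hG'y]
        exact wprime_alg c s _ _ _ (by simp [s, Complex.star_def, Complex.conj_ofReal])
          (by simp [c, Complex.star_def, Complex.conj_ofReal]) (hBh y (hI_sub hy)).eq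
      refine (hsum.congr (fun t _ => ?_) ?_).congr_deriv ?_ <;>
        first
          | (rw [hval, hzero]; simp)
          | simp [Matrix.sub_apply, Matrix.mul_apply, Matrix.conjTranspose_apply]
    have hWconst : ∀ i j : Fin r, ((F x)ᴴ * G x - (G x)ᴴ * F x) i j
        = ((F x₀)ᴴ * G x₀ - (G x₀)ᴴ * F x₀) i j := by
      intro i j
      have hb := Convex.norm_image_sub_le_of_norm_hasDerivWithin_le (C := 0)
        (f' := fun _ => (0:ℂ)) (fun y hy => hWd y hy i j) (fun y _ => by simp) hconv hx₀ hx
      have h0 : ‖((F x)ᴴ * G x - (G x)ᴴ * F x) i j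
          - ((F x₀)ᴴ * G x₀ - (G x₀)ᴴ * F x₀) i j‖ ≤ 0 := by simpa using hb
      exact sub_eq_zero.1 (norm_le_zero_iff.1 h0)
    have h2 : (G x₀)ᴴ * F x₀ = (F x₀)ᴴ * G x₀ := by
      have := hherm.eq
      rwa [Matrix.conjTranspose_mul, Matrix.conjTranspose_conjTranspose] at this
    have hWx : (F x)ᴴ * G x = (G x)ᴴ * F x := by
      have hz : (F x)ᴴ * G x - (G x)ᴴ * F x = 0 := by
        ext i j
        rw [hWconst i j, h2]
        simp
      exact sub_eq_zero.1 hz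
    have hdetx := hdet x hx
    have hdetH : IsUnit ((F x)ᴴ).det := by
      rw [Matrix.det_conjTranspose]; exact hdetx.star
    have h1 : (F x)ᴴ * (G x * (F x)⁻¹)ᴴ = (G x)ᴴ := by
      rw [Matrix.conjTranspose_mul, Matrix.conjTranspose_nonsing_inv, ← Matrix.mul_assoc,
        Matrix.mul_nonsing_inv _ hdetH, Matrix.one_mul]
    have h3 : (F x)ᴴ * (G x * (F x)⁻¹) = (G x)ᴴ := by
      rw [← Matrix.mul_assoc, hWx, Matrix.mul_assoc, Matrix.mul_nonsing_inv _ hdetx,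
        Matrix.mul_one]
    show (G x * (F x)⁻¹)ᴴ = G x * (F x)⁻¹
    have hcc := congrArg (fun M => ((F x)ᴴ)⁻¹ * M) (h1.trans h3.symm)
    simpa [← Matrix.mul_assoc, Matrix.nonsing_inv_mul _ hdetH] using hcc
end

section
/- Let I ⊆ ℝ be an interval, let M : I → M_r(ℂ) and p : I → ℝ, and let Q̃ : I → M_r(ℂ) be differentiable with Q̃'(x) = (I_r + Q̃(x)M(x))·(I_r + M(x)Q̃(x)) − p(x)·Q̃(x)² for all x ∈ I. Suppose x₀ ∈ I, Q̃(x₀) is Hermitian, and v ∈ ℂ^r satisfies |v| = 1 and Q̃(x₀)v = 0. Then v† Q̃'(x₀) v = 1. -/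
open Matrix

/-- **Unit crossing speed at a focal point.**
Suppose `Q̃` satisfies `Q̃' = (1 + Q̃M)(1 + MQ̃) − p Q̃²` on an interval `I`, `Q̃(x₀)` is
Hermitian, and `v` is a unit vector with `Q̃(x₀)v = 0`.  Then `v† Q̃'(x₀) v = 1`, i.e. the
eigenvalue of `Q̃` vanishing at `x₀` is pushed up through zero with unit speed. -/
theorem stmt_15 {r : ℕ} (hr : 1 ≤ r) (I : Set ℝ)
    (M : ℝ → Matrix (Fin r) (Fin r) ℂ) (p : ℝ → ℝ)
    (Qt : ℝ → Matrix (Fin r) (Fin r) ℂ)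
    (hQ' : ∀ x ∈ I, ∀ i j : Fin r,
      HasDerivWithinAt (fun t => Qt t i j)
        (((((1 : Matrix (Fin r) (Fin r) ℂ) + Qt x * M x)
          * ((1 : Matrix (Fin r) (Fin r) ℂ) + M x * Qt x)
          - ((p x : ℝ) : ℂ) • (Qt x ^ 2)) : Matrix (Fin r) (Fin r) ℂ) i j) I x)
    (x₀ : ℝ) (hx₀ : x₀ ∈ I)
    (hherm : (Qt x₀).IsHermitian)
    (v : Fin r → ℂ) (hv : ∑ i, ‖v i‖ ^ 2 = 1)
    (hker : (Qt x₀).mulVec v = 0)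
    (D : Matrix (Fin r) (Fin r) ℂ)
    (hD : D = ((1 : Matrix (Fin r) (Fin r) ℂ) + Qt x₀ * M x₀)
      * ((1 : Matrix (Fin r) (Fin r) ℂ) + M x₀ * Qt x₀)
      - ((p x₀ : ℝ) : ℂ) • (Qt x₀ ^ 2)) :
    star v ⬝ᵥ D.mulVec v = 1 := by
  have hQstar : (Qt x₀)ᴴ = Qt x₀ := hherm
  have hvQ : (Qt x₀).vecMul (star v) = 0 := by
    have h := congrArg star hker
    rwa [Matrix.star_mulVec, hQstar, star_zero] at h
  have hDv : D.mulVec v = v + (Qt x₀).mulVec ((M x₀).mulVec v) := by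
    subst hD
    simp [Matrix.sub_mulVec, Matrix.smul_mulVec, sq, ← Matrix.mulVec_mulVec,
      Matrix.add_mulVec, Matrix.one_mulVec, hker]
  rw [hDv, dotProduct_add, Matrix.dotProduct_mulVec, hvQ, zero_dotProduct, add_zero]
  have : star v ⬝ᵥ v = ((∑ i, ‖v i‖ ^ 2 : ℝ) : ℂ) := by
    simp [dotProduct, Complex.normSq_eq_norm_sq, ← Complex.normSq_eq_norm_sq, mul_comm,
      Complex.mul_conj]
  rw [this, hv, Complex.ofReal_one]
end

section
/- (Hadamard first variation formula.) Let n ≥ 1 and let A : ℝ → M_n(ℂ) be differentiable with A(t) Hermitian for every t. Suppose λ : ℝ → ℝ and v : ℝ → ℂⁿ are differentiable and satisfy A(t)v(t) = λ(t)v(t) and ⟨v(t), v(t)⟩ = 1 for all t. Then for every t₀, λ'(t₀) = ⟨v(t₀), A'(t₀) v(t₀)⟩. -/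
open Matrix

/-- **Hadamard first variation formula.**
If `A(t)` is a differentiable path of Hermitian matrices with differentiable eigenvalue
path `λ(t)` and differentiable normalized eigenvector path `v(t)`, then
`λ'(t₀) = ⟨v(t₀), A'(t₀) v(t₀)⟩`. -/
theorem stmt_16 {n : ℕ} (hn : 1 ≤ n)
    (A A' : ℝ → Matrix (Fin n) (Fin n) ℂ)
    (hA : ∀ (t : ℝ) (i j : Fin n), HasDerivAt (fun s => A s i j) (A' t i j) t)
    (hherm : ∀ t : ℝ, (A t).IsHermitian)
    (lam : ℝ → ℝ) (v : ℝ → Fin n → ℂ)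
    (hlam_diff : Differentiable ℝ lam)
    (hv_diff : ∀ i : Fin n, Differentiable ℝ (fun t => v t i))
    (heig : ∀ t : ℝ, (A t).mulVec (v t) = ((lam t : ℝ) : ℂ) • v t)
    (hnorm : ∀ t : ℝ, star (v t) ⬝ᵥ v t = 1)
    (t₀ : ℝ) :
    ((deriv lam t₀ : ℝ) : ℂ) = star (v t₀) ⬝ᵥ (A' t₀).mulVec (v t₀) := by
  classical
  set w : Fin n → ℂ := fun i => deriv (fun t => v t i) t₀ with hw
  have hv : ∀ i, HasDerivAt (fun t => v t i) (w i) t₀ :=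
    fun i => (hv_diff i t₀).hasDerivAt
  have hg : HasDerivAt (fun t => star (v t) ⬝ᵥ v t)
      (∑ i, (star (w i) * v t₀ i + star (v t₀ i) * w i)) t₀ := by
    simp only [dotProduct, Pi.star_apply]
    exact HasDerivAt.fun_sum fun i _ => ((hv i).star.fun_mul (hv i))
  have hg0 : (∑ i, (star (w i) * v t₀ i + star (v t₀ i) * w i)) = 0 := by
    have hconst : (fun t => star (v t) ⬝ᵥ v t) = fun _ => (1:ℂ) := funext hnorm
    rw [hconst] at hg
    exact hg.unique (hasDerivAt_const _ _)
  set D : ℂ := ∑ i, (star (w i) * (∑ j, A t₀ i j * v t₀ j)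
      + star (v t₀ i) * (∑ j, (A' t₀ i j * v t₀ j + A t₀ i j * w j))) with hD
  have hf : HasDerivAt (fun t => star (v t) ⬝ᵥ (A t).mulVec (v t)) D t₀ := by
    simp only [dotProduct, mulVec, Pi.star_apply, hD]
    exact HasDerivAt.fun_sum fun i _ =>
      ((hv i).star.fun_mul (HasDerivAt.fun_sum fun j _ => (hA t₀ i j).fun_mul (hv j)))
  have hfl : (fun t => star (v t) ⬝ᵥ (A t).mulVec (v t)) = fun t => ((lam t : ℝ) : ℂ) := by
    funext t
    rw [heig t, dotProduct_smul, hnorm t, smul_eq_mul, mul_one]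
  rw [hfl] at hf
  have hlam : HasDerivAt (fun t => ((lam t : ℝ) : ℂ)) ((deriv lam t₀ : ℝ) : ℂ) t₀ :=
    ((hlam_diff t₀).hasDerivAt).ofReal_comp
  have hDe : ((deriv lam t₀ : ℝ) : ℂ) = D := hlam.unique hf
  rw [hDe]
  have hsplit : D = (star w ⬝ᵥ (A t₀).mulVec (v t₀))
      + (star (v t₀) ⬝ᵥ (A' t₀).mulVec (v t₀))
      + (star (v t₀) ⬝ᵥ (A t₀).mulVec w) := by
    simp only [hD, dotProduct, mulVec, Pi.star_apply, mul_add, Finset.mul_sum,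
      Finset.sum_add_distrib]
    ring
  have h1 : star w ⬝ᵥ (A t₀).mulVec (v t₀) = ((lam t₀ : ℝ) : ℂ) * ∑ i, star (w i) * v t₀ i := by
    rw [heig t₀, dotProduct_smul, smul_eq_mul]
    simp [dotProduct]
  have h3 : star (v t₀) ⬝ᵥ (A t₀).mulVec w = ((lam t₀ : ℝ) : ℂ) * ∑ i, star (v t₀ i) * w i := by
    rw [dotProduct_mulVec]
    have : star (v t₀) ᵥ* A t₀ = star ((A t₀) *ᵥ v t₀) := by
      rw [star_mulVec, (hherm t₀).eq]
    rw [this, heig t₀, star_smul, smul_dotProduct]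
    simp [dotProduct, smul_eq_mul]
  rw [hsplit, h1, h3]
  have : ((lam t₀ : ℝ) : ℂ) * (∑ i, star (w i) * v t₀ i) +
      ((lam t₀ : ℝ) : ℂ) * (∑ i, star (v t₀ i) * w i) = 0 := by
    rw [← mul_add, ← Finset.sum_add_distrib, hg0, mul_zero]
  linear_combination this
end

section
/- (Hadamard second variation formula.) Let n ≥ 1 and let A : ℝ → M_n(ℂ) be twice differentiable with A(t) Hermitian for every t. Suppose λ₁,…,λ_n : ℝ → ℝ are twice differentiable, v₁,…,v_n : ℝ → ℂⁿ are differentiable, A(t)v_i(t) = λ_i(t)v_i(t) for all t and i, the vectors v₁(t),…,v_n(t) are orthonormal for every t, and λ₁(t₀),…,λ_n(t₀) are pairwise distinct. Then for each i, λ_i''(t₀) = ⟨v_i(t₀), A''(t₀)v_i(t₀)⟩ + 2·Σ_{j≠i} |⟨v_j(t₀), A'(t₀)v_i(t₀)⟩|² / (λ_i(t₀) − λ_j(t₀)). -/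
open Matrix

lemma aux_hasDerivAt_dot {n : ℕ} (f g : ℝ → Fin n → ℂ) (f' g' : Fin n → ℂ)
    (M : ℝ → Matrix (Fin n) (Fin n) ℂ) (MD : Matrix (Fin n) (Fin n) ℂ) (t : ℝ)
    (hf : ∀ k, HasDerivAt (fun s => f s k) (f' k) t)
    (hg : ∀ k, HasDerivAt (fun s => g s k) (g' k) t)
    (hM : ∀ k l, HasDerivAt (fun s => M s k l) (MD k l) t) :
    HasDerivAt (fun s => star (f s) ⬝ᵥ (M s).mulVec (g s))
      (star f' ⬝ᵥ (M t).mulVec (g t) + star (f t) ⬝ᵥ MD.mulVec (g t)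
        + star (f t) ⬝ᵥ (M t).mulVec g') t := by
  have hinner : ∀ k : Fin n, HasDerivAt (fun s => ∑ l, M s k l * g s l)
      (∑ l, (MD k l * g t l + M t k l * g' l)) t := by
    intro k
    exact HasDerivAt.fun_sum fun l _ => (hM k l).mul (hg l)
  have hstar : ∀ k : Fin n, HasDerivAt (fun s => star (f s k)) (star (f' k)) t :=
    fun k => (hf k).star
  have key : ∀ k : Fin n, HasDerivAt
      (fun s => star (f s k) * ∑ l, M s k l * g s l)
      (star (f' k) * (∑ l, M t k l * g t l)
        + star (f t k) * (∑ l, (MD k l * g t l + M t k l * g' l))) t :=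
    fun k => (hstar k).mul (hinner k)
  have h := HasDerivAt.fun_sum (u := Finset.univ) fun k _ => key k
  have he1 : (fun s => ∑ k, star (f s k) * ∑ l, M s k l * g s l)
      = fun s => star (f s) ⬝ᵥ (M s).mulVec (g s) := by
    funext s
    simp [dotProduct, mulVec]
  have he2 : (∑ k, (star (f' k) * (∑ l, M t k l * g t l)
        + star (f t k) * (∑ l, (MD k l * g t l + M t k l * g' l))))
      = star f' ⬝ᵥ (M t).mulVec (g t) + star (f t) ⬝ᵥ MD.mulVec (g t)
        + star (f t) ⬝ᵥ (M t).mulVec g' := by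
    simp [dotProduct, mulVec, Finset.sum_add_distrib, mul_add, Finset.mul_sum, add_assoc]
  rw [he1, he2] at h
  exact h

lemma aux_complete {n : ℕ} (V : Fin n → Fin n → ℂ)
    (horth : ∀ i j, star (V i) ⬝ᵥ V j = if i = j then 1 else 0)
    (M : Matrix (Fin n) (Fin n) ℂ) (u w : Fin n → ℂ) :
    star u ⬝ᵥ M.mulVec w
      = ∑ j, (star u ⬝ᵥ M.mulVec (V j)) * (star (V j) ⬝ᵥ w) := by
  set U : Matrix (Fin n) (Fin n) ℂ := Matrix.of fun k j => V j k with hU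
  have hUU : Uᴴ * U = 1 := by
    ext j j'
    simpa [Matrix.mul_apply, conjTranspose_apply, hU, dotProduct, Matrix.one_apply, eq_comm]
      using horth j j'
  have hUU' : U * Uᴴ = 1 := mul_eq_one_comm.mp hUU
  have key : ∀ (a x : Fin n → ℂ), a ⬝ᵥ U.mulVec x = ∑ j, (a ⬝ᵥ V j) * x j := by
    intro a x
    simp only [dotProduct, mulVec, hU, Matrix.of_apply, Finset.mul_sum, Finset.sum_mul]
    rw [Finset.sum_comm]
    simp [mul_assoc]
  calc star u ⬝ᵥ M.mulVec w = star u ⬝ᵥ M.mulVec ((U * Uᴴ).mulVec w) := by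
        rw [hUU']; simp
    _ = ∑ j, (star u ⬝ᵥ M.mulVec (V j)) * (star (V j) ⬝ᵥ w) := by
        rw [← Matrix.mulVec_mulVec, dotProduct_mulVec, key]
        congr 1; funext j
        rw [← dotProduct_mulVec]
        simp [mulVec, conjTranspose_apply, hU, dotProduct]

/-- **Hadamard second variation formula.**
If `A(t)` is a twice-differentiable path of Hermitian matrices with twice-differentiable
eigenvalue paths `λᵢ(t)`, differentiable orthonormal eigenvector paths `vᵢ(t)`, and the
eigenvalues are pairwise distinct at `t₀`, then
`λᵢ''(t₀) = ⟨vᵢ, A'' vᵢ⟩ + 2 Σ_{j≠i} |⟨vⱼ, A' vᵢ⟩|² / (λᵢ − λⱼ)` at `t₀`. -/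
theorem stmt_17 {n : ℕ} (hn : 1 ≤ n)
    (A A' A'' : ℝ → Matrix (Fin n) (Fin n) ℂ)
    (hA : ∀ (t : ℝ) (i j : Fin n), HasDerivAt (fun s => A s i j) (A' t i j) t)
    (hA' : ∀ (t : ℝ) (i j : Fin n), HasDerivAt (fun s => A' s i j) (A'' t i j) t)
    (hherm : ∀ t : ℝ, (A t).IsHermitian)
    (lam lam' lam'' : Fin n → ℝ → ℝ)
    (hlam : ∀ (i : Fin n) (t : ℝ), HasDerivAt (lam i) (lam' i t) t)
    (hlam' : ∀ (i : Fin n) (t : ℝ), HasDerivAt (lam' i) (lam'' i t) t)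
    (v : Fin n → ℝ → Fin n → ℂ)
    (hv_diff : ∀ (i k : Fin n), Differentiable ℝ (fun t => v i t k))
    (heig : ∀ (i : Fin n) (t : ℝ), (A t).mulVec (v i t) = ((lam i t : ℝ) : ℂ) • v i t)
    (horth : ∀ (t : ℝ) (i j : Fin n),
      star (v i t) ⬝ᵥ v j t = if i = j then 1 else 0)
    (t₀ : ℝ) (hdist : ∀ i j : Fin n, i ≠ j → lam i t₀ ≠ lam j t₀) :
    ∀ i : Fin n, ((lam'' i t₀ : ℝ) : ℂ) =
      star (v i t₀) ⬝ᵥ (A'' t₀).mulVec (v i t₀)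
        + 2 * ∑ j ∈ Finset.univ.erase i,
            ((‖star (v j t₀) ⬝ᵥ (A' t₀).mulVec (v i t₀)‖ ^ 2
              / (lam i t₀ - lam j t₀) : ℝ) : ℂ) := by
  intro i
  -- derivative of eigenvector paths
  set vd : ℝ → Fin n → Fin n → ℂ := fun t j k => deriv (fun s => v j s k) t with hvd_def
  have hvd : ∀ (j k : Fin n) (t : ℝ), HasDerivAt (fun s => v j s k) (vd t j k) t :=
    fun j k t => ((hv_diff j k) t).hasDerivAt
  -- Hermitian of A' (at every t)
  have hA'herm : ∀ t, (A' t)ᴴ = A' t := by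
    intro t
    ext k l
    have h1 : HasDerivAt (fun s => A s k l) (star (A' t l k)) t := by
      have := (hA t l k).star
      have he : (fun s => star (A s l k)) = fun s => A s k l := by
        funext s
        exact (hherm s).apply k l
      rwa [he] at this
    have := h1.unique (hA t k l)
    simp [conjTranspose_apply, ← this]
  -- Hermitian flip for A'
  have hflip : ∀ (x y : Fin n → ℂ),
      star x ⬝ᵥ (A' t₀).mulVec y = star (star y ⬝ᵥ (A' t₀).mulVec x) := by
    intro x y
    rw [star_dotProduct, star_mulVec, hA'herm, ← dotProduct_mulVec]
  -- skew-symmetry of ⟨v_j', v_i⟩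
  have hskew : ∀ (t : ℝ) (j : Fin n),
      star (vd t j) ⬝ᵥ v i t + star (v j t) ⬝ᵥ vd t i = 0 := by
    intro t j
    have hD := aux_hasDerivAt_dot (fun s => v j s) (fun s => v i s) (vd t j) (vd t i)
      (fun _ => (1 : Matrix (Fin n) (Fin n) ℂ)) 0 t (fun k => hvd j k t) (fun k => hvd i k t)
      (fun k l => hasDerivAt_const t _)
    simp only [Matrix.one_mulVec, Matrix.zero_mulVec, dotProduct_zero, add_zero] at hD
    have he : (fun s => star (v j s) ⬝ᵥ v i s) = fun _ => (if j = i then (1:ℂ) else 0) := by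
      funext s; exact horth s j i
    rw [he] at hD
    exact hD.unique (hasDerivAt_const t _)
  -- first variation identity
  have hA1 : ∀ (t : ℝ) (j : Fin n), star (v j t) ⬝ᵥ (A' t).mulVec (v i t)
      = (if j = i then ((lam' i t : ℝ) : ℂ) else 0)
        + (((lam i t : ℝ) : ℂ) - ((lam j t : ℝ) : ℂ)) * (star (v j t) ⬝ᵥ vd t i) := by
    intro t j
    have hD := aux_hasDerivAt_dot (fun s => v j s) (fun s => v i s) (vd t j) (vd t i)
      A (A' t) t (fun k => hvd j k t) (fun k => hvd i k t) (fun k l => hA t k l)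
    have he : (fun s => star (v j s) ⬝ᵥ (A s).mulVec (v i s))
        = fun s => (if j = i then ((lam i s : ℝ) : ℂ) else 0) := by
      funext s
      rw [heig, dotProduct_smul, horth]
      split <;> simp
    rw [he] at hD
    have hG : HasDerivAt (fun s => (if j = i then ((lam i s : ℝ) : ℂ) else 0))
        (if j = i then ((lam' i t : ℝ) : ℂ) else 0) t := by
      by_cases h : j = i
      · simpa [h] using (hlam i t).ofReal_comp
      · simpa [h] using hasDerivAt_const t (0 : ℂ)
    have heq := hD.unique hG
    have h2 : star (vd t j) ⬝ᵥ v i t = -(star (v j t) ⬝ᵥ vd t i) :=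
      eq_neg_of_add_eq_zero_left (hskew t j)
    have e1 : star (vd t j) ⬝ᵥ (A t).mulVec (v i t)
        = -(((lam i t : ℝ) : ℂ) * (star (v j t) ⬝ᵥ vd t i)) := by
      rw [heig, dotProduct_smul, smul_eq_mul, h2]
      ring
    have e3 : star (v j t) ⬝ᵥ (A t).mulVec (vd t i)
        = ((lam j t : ℝ) : ℂ) * (star (v j t) ⬝ᵥ vd t i) := by
      rw [dotProduct_mulVec]
      have h1 : star (v j t) ᵥ* A t = star ((A t).mulVec (v j t)) := by
        rw [star_mulVec, (hherm t).eq]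
      rw [h1, heig, star_smul, smul_dotProduct]
      simp [Complex.star_def, Complex.conj_ofReal]
    rw [e1, e3] at heq
    linear_combination heq
  have hfirst : ∀ t : ℝ, ((lam' i t : ℝ) : ℂ) = star (v i t) ⬝ᵥ (A' t).mulVec (v i t) := by
    intro t
    have := hA1 t i
    simp at this
    rw [this]
  -- second derivative
  have hD2 := aux_hasDerivAt_dot (fun s => v i s) (fun s => v i s) (vd t₀ i) (vd t₀ i)
    A' (A'' t₀) t₀ (fun k => hvd i k t₀) (fun k => hvd i k t₀) (fun k l => hA' t₀ k l)
  have he2 : (fun s => star (v i s) ⬝ᵥ (A' s).mulVec (v i s))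
      = fun s => ((lam' i s : ℝ) : ℂ) := by
    funext s; exact (hfirst s).symm
  rw [he2] at hD2
  have hB := hD2.unique ((hlam' i t₀).ofReal_comp)
  -- notation
  set m : Fin n → ℂ := fun j => star (v j t₀) ⬝ᵥ (A' t₀).mulVec (v i t₀) with hm_def
  set c : Fin n → ℂ := fun j => star (v j t₀) ⬝ᵥ vd t₀ i with hc_def
  have hz : star (v i t₀) ⬝ᵥ (A' t₀).mulVec (vd t₀ i) = ∑ j, star (m j) * c j := by
    rw [aux_complete (fun j => v j t₀) (fun a b => horth t₀ a b) (A' t₀) (v i t₀) (vd t₀ i)]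
    congr 1; funext j
    rw [hflip]
  have hw : star (vd t₀ i) ⬝ᵥ (A' t₀).mulVec (v i t₀) = ∑ j, m j * star (c j) := by
    rw [hflip, hz]
    simp [star_sum, star_mul', mul_comm]
  rw [hw, hz] at hB
  -- hB : ∑ m*star c + ⟨v,A''v⟩ + ∑ star m * c = lam''
  have hT : ∀ j, j ≠ i → m j * star (c j) + star (m j) * c j
      = 2 * ((‖m j‖ ^ 2 / (lam i t₀ - lam j t₀) : ℝ) : ℂ) := by
    intro j hji
    set d : ℂ := ((lam i t₀ - lam j t₀ : ℝ) : ℂ) with hd_def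
    have hd0 : d ≠ 0 := by
      simp only [hd_def, ne_eq, Complex.ofReal_eq_zero, sub_eq_zero]
      exact hdist i j (Ne.symm hji)
    have hstar_d : star d = d := by
      simp [hd_def, Complex.star_def, Complex.conj_ofReal]
    have hmc : m j = d * c j := by
      have := hA1 t₀ j
      simp only [hji, if_neg, ite_false] at this
      simp only [hm_def, hc_def]
      rw [hd_def]
      push_cast
      rw [this]
      ring
    have hcval : c j = m j / d := by
      rw [hmc]; field_simp
    have hnorm : m j * star (m j) = ((‖m j‖ ^ 2 : ℝ) : ℂ) := by
      rw [Complex.star_def, Complex.mul_conj, Complex.normSq_eq_norm_sq]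
    rw [hcval]
    rw [show star (m j / d) = star (m j) / d by rw [star_div₀, hstar_d]]
    rw [show ((‖m j‖ ^ 2 / (lam i t₀ - lam j t₀) : ℝ) : ℂ)
        = ((‖m j‖ ^ 2 : ℝ) : ℂ) / d by rw [hd_def]; push_cast; ring]
    rw [← hnorm]
    field_simp
    ring
  have hTi : m i * star (c i) + star (m i) * c i = 0 := by
    have hmi : m i = ((lam' i t₀ : ℝ) : ℂ) := (hfirst t₀).symm
    have hci : star (c i) = -c i := by
      have h1 := hskew t₀ i
      have h2 : star (vd t₀ i) ⬝ᵥ v i t₀ = star (c i) := star_dotProduct _ _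
      rw [h2] at h1
      linear_combination h1
    rw [hmi, hci]
    simp [Complex.star_def, Complex.conj_ofReal]
    try ring
  -- assemble
  have hsplit : (∑ j, (m j * star (c j) + star (m j) * c j))
      = ∑ j ∈ Finset.univ.erase i, 2 * ((‖m j‖ ^ 2 / (lam i t₀ - lam j t₀) : ℝ) : ℂ) := by
    rw [← Finset.add_sum_erase _ _ (Finset.mem_univ i), hTi, zero_add]
    exact Finset.sum_congr rfl fun j hj => hT j (Finset.ne_of_mem_erase hj)
  rw [← hB, Finset.mul_sum, ← hsplit, Finset.sum_add_distrib]
  ring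
end

section
/- (Lax pair compatibility and Painlevé II.) Let u : ℝ → ℝ be twice differentiable. For (x,w) ∈ ℝ², define the 2×2 real matrices A_w(x,w) = [[u(x)², −w·u(x) − u'(x)], [−w·u(x) + u'(x), w² − x − u(x)²]] and A_x(x,w) = [[0, u(x)], [u(x), −w]]. Then the zero-curvature equation ∂_x A_w(x,w) − ∂_w A_x(x,w) = A_x(x,w)·A_w(x,w) − A_w(x,w)·A_x(x,w) holds for all (x,w) ∈ ℝ² if and only if u satisfies the Painlevé II equation u''(x) = 2u(x)³ + x·u(x) for all x ∈ ℝ. -/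
open Matrix

/-- The `w`-member of the Painlevé II Lax pair. -/
noncomputable def laxAw (u u' : ℝ → ℝ) (x w : ℝ) : Matrix (Fin 2) (Fin 2) ℝ :=
  !![u x ^ 2, -w * u x - u' x;
     -w * u x + u' x, w ^ 2 - x - u x ^ 2]

/-- The `x`-member of the Painlevé II Lax pair. -/
def laxAx (u : ℝ → ℝ) (x w : ℝ) : Matrix (Fin 2) (Fin 2) ℝ :=
  !![0, u x;
     u x, -w]

/-- **Lax pair compatibility and Painlevé II.**
For a twice differentiable `u` (with derivatives `u'`, `u''`), the zero-curvature equation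
`∂ₓ A_w − ∂_w A_x = [A_x, A_w]` holds at every `(x, w)` if and only if `u` satisfies the
Painlevé II equation `u'' = 2u³ + xu`.  The partial derivatives are encoded via
`HasDerivAt`, entrywise. -/
theorem stmt_18 (u u' u'' : ℝ → ℝ)
    (hu : ∀ x : ℝ, HasDerivAt u (u' x) x)
    (hu' : ∀ x : ℝ, HasDerivAt u' (u'' x) x) :
    (∀ x w : ℝ, ∃ Dx Dw : Matrix (Fin 2) (Fin 2) ℝ,
      (∀ i j : Fin 2, HasDerivAt (fun s => laxAw u u' s w i j) (Dx i j) x) ∧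
      (∀ i j : Fin 2, HasDerivAt (fun s => laxAx u x s i j) (Dw i j) w) ∧
      Dx - Dw = laxAx u x w * laxAw u u' x w - laxAw u u' x w * laxAx u x w)
    ↔ (∀ x : ℝ, u'' x = 2 * u x ^ 3 + x * u x) := by
  constructor
  · intro h x
    obtain ⟨Dx, Dw, hDx, hDw, heq⟩ := h x 0
    -- Dx 0 1 = -u'' x
    have h1 : HasDerivAt (fun s => laxAw u u' s 0 0 1) (-(0 : ℝ) * u' x - u'' x) x := by
      have : (fun s => laxAw u u' s 0 0 1) = fun s => -(0:ℝ) * u s - u' s := by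
        funext s; simp [laxAw]
      rw [this]
      exact (((hu x).const_mul (-(0:ℝ))).sub (hu' x))
    have hDx01 : Dx 0 1 = -(0:ℝ) * u' x - u'' x := HasDerivAt.unique (hDx 0 1) h1
    have h2 : HasDerivAt (fun s : ℝ => laxAx u x s 0 1) (0 : ℝ) 0 := by
      have : (fun s : ℝ => laxAx u x s 0 1) = fun _ => u x := by
        funext s; simp [laxAx]
      rw [this]; exact hasDerivAt_const _ _
    have hDw01 : Dw 0 1 = 0 := HasDerivAt.unique (hDw 0 1) h2
    have := congrFun (congrFun heq 0) 1
    simp [Matrix.sub_apply, hDx01, hDw01, laxAw, laxAx, Matrix.mul_apply,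
      Fin.sum_univ_two] at this
    nlinarith [this]
  · intro h x w
    refine ⟨!![2 * u x * u' x, -w * u' x - u'' x;
              -w * u' x + u'' x, -1 - 2 * u x * u' x],
            !![0, 0; 0, -1], ?_, ?_, ?_⟩
    · intro i j
      fin_cases i <;> fin_cases j <;> simp [laxAw]
      · have := (hu x).pow 2
        convert this using 1 <;> norm_num <;> first | rfl | ring
      · have := ((hu x).const_mul (-w)).sub (hu' x)
        convert this using 1 <;> first | rfl | (funext s; simp) | ring
      · have := ((hu x).const_mul (-w)).add (hu' x)
        convert this using 1 <;> first | rfl | (funext s; simp) | ring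
      · have := ((hasDerivAt_const x (w ^ 2)).sub (hasDerivAt_id x)).sub ((hu x).pow 2)
        convert this using 1 <;> norm_num <;> first | rfl | ring
    · intro i j
      fin_cases i <;> fin_cases j <;> simp [laxAx]
      · exact hasDerivAt_const _ _
      · exact hasDerivAt_const _ _
      · exact hasDerivAt_const _ _
      · exact (hasDerivAt_id w).neg
    · ext i j
      fin_cases i <;> fin_cases j <;>
        simp [Matrix.sub_apply, laxAw, laxAx, Matrix.mul_apply, Fin.sum_univ_two] <;>
      nlinarith [h x]
end

section
/- (First integral of Painlevé II.) Let u : ℝ → ℝ be twice continuously differentiable and satisfy u''(x) = 2u(x)³ + x·u(x) for all x ∈ ℝ. Suppose that u² is integrable on [x,∞) for every real x, and that u(x) → 0, u'(x) → 0 and x·u(x)² → 0 as x → +∞. Then for every x ∈ ℝ: ∫_x^∞ u(t)² dt + u(x)⁴ − u'(x)² + x·u(x)² = 0. -/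
open MeasureTheory

/-- **First integral of Painlevé II (Section 6).**
If `u` is a twice continuously differentiable solution of `u'' = 2u³ + xu` with `u² `
integrable at `+∞` and `u, u', x u² → 0` as `x → +∞`, then
`∫ₓ^∞ u² + u⁴ − (u')² + x u² = 0` identically; in particular this holds for the
Hastings–McLeod solution. -/
theorem stmt_19 (u : ℝ → ℝ) (hu : ContDiff ℝ 2 u)
    (hode : ∀ x : ℝ, deriv (deriv u) x = 2 * u x ^ 3 + x * u x)
    (hint : ∀ x : ℝ, IntegrableOn (fun t => u t ^ 2) (Set.Ici x))
    (hu0 : Filter.Tendsto u Filter.atTop (nhds 0))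
    (hu'0 : Filter.Tendsto (deriv u) Filter.atTop (nhds 0))
    (hxu : Filter.Tendsto (fun x => x * u x ^ 2) Filter.atTop (nhds 0)) :
    ∀ x : ℝ, (∫ t in Set.Ici x, u t ^ 2) + u x ^ 4 - (deriv u x) ^ 2 + x * u x ^ 2 = 0 := by
  have hucont : Continuous u := hu.continuous
  have hsq : Continuous (fun t => u t ^ 2) := hucont.pow 2
  set g : ℝ → ℝ := fun x => ∫ t in Set.Ici x, u t ^ 2 with hg
  -- key decomposition
  have hkey : ∀ x : ℝ, g x = g 0 - ∫ t in (0:ℝ)..x, u t ^ 2 := by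
    intro x
    have hIci : ∀ a : ℝ, (∫ t in Set.Ici a, u t ^ 2) = ∫ t in Set.Ioi a, u t ^ 2 := by
      intro a; exact integral_Ici_eq_integral_Ioi
    rcases le_or_gt 0 x with hx | hx
    · have hsplit : (∫ t in Set.Ioi (0:ℝ), u t ^ 2)
          = (∫ t in Set.Ioc 0 x, u t ^ 2) + ∫ t in Set.Ioi x, u t ^ 2 := by
        rw [← setIntegral_union]
        · rw [Set.Ioc_union_Ioi_eq_Ioi hx]
        · exact Set.Ioc_disjoint_Ioi le_rfl
        · exact measurableSet_Ioi
        · exact ((hint 0).mono ((Set.Ioc_subset_Ioi_self.trans Set.Ioi_subset_Ici_self)) le_rfl)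
        · exact ((hint x).mono (Set.Ioi_subset_Ici_self) le_rfl)
      rw [hg]
      simp only [hIci]
      rw [intervalIntegral.integral_of_le hx, hsplit]
      ring
    · have hsplit : (∫ t in Set.Ioi x, u t ^ 2)
          = (∫ t in Set.Ioc x 0, u t ^ 2) + ∫ t in Set.Ioi (0:ℝ), u t ^ 2 := by
        rw [← setIntegral_union]
        · rw [Set.Ioc_union_Ioi_eq_Ioi hx.le]
        · exact Set.Ioc_disjoint_Ioi le_rfl
        · exact measurableSet_Ioi
        · exact ((hint x).mono ((Set.Ioc_subset_Ioi_self.trans Set.Ioi_subset_Ici_self)) le_rfl)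
        · exact ((hint 0).mono (Set.Ioi_subset_Ici_self) le_rfl)
      rw [hg]
      simp only [hIci]
      rw [intervalIntegral.integral_symm, intervalIntegral.integral_of_le hx.le, hsplit]
      ring
  -- derivative of g
  have hgderiv : ∀ x : ℝ, HasDerivAt g (-(u x ^ 2)) x := by
    intro x
    have h1 : HasDerivAt (fun y => ∫ t in (0:ℝ)..y, u t ^ 2) (u x ^ 2) x := by
      exact intervalIntegral.integral_hasDerivAt_right
        (hsq.intervalIntegrable 0 x)
        (hsq.stronglyMeasurableAtFilter _ _)
        hsq.continuousAt
    have h2 : HasDerivAt (fun y => g 0 - ∫ t in (0:ℝ)..y, u t ^ 2) (-(u x ^ 2)) x := by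
      simpa using (show HasDerivAt (fun y => g 0 - ∫ t in (0:ℝ)..y, u t ^ 2) (0 - u x ^ 2) x
        from (hasDerivAt_const x (g 0)).sub h1)
    exact h2.congr_of_eventuallyEq (Filter.Eventually.of_forall hkey)
  -- differentiability of u and deriv u
  have hud : Differentiable ℝ u := hu.differentiable (by norm_num)
  have hu1 : ContDiff ℝ 1 (deriv u) := by
    have := (contDiff_succ_iff_deriv (n := 1)).mp (by exact_mod_cast hu)
    exact this.2.2
  have hu'd : Differentiable ℝ (deriv u) := hu1.differentiable (by norm_num)
  set F : ℝ → ℝ := fun x => g x + u x ^ 4 - (deriv u x) ^ 2 + x * u x ^ 2 with hF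
  have hFderiv : ∀ x : ℝ, HasDerivAt F 0 x := by
    intro x
    have hux : HasDerivAt u (deriv u x) x := (hud x).hasDerivAt
    have hu'x : HasDerivAt (deriv u) (deriv (deriv u) x) x := (hu'd x).hasDerivAt
    have h4 : HasDerivAt (fun y => u y ^ 4) (4 * u x ^ 3 * deriv u x) x := by
      simpa using (show HasDerivAt (fun y => u y ^ 4) _ x from hux.pow 4)
    have h2 : HasDerivAt (fun y => (deriv u y) ^ 2)
        (2 * deriv u x * deriv (deriv u) x) x := by
      simpa using (show HasDerivAt (fun y => (deriv u y) ^ 2) _ x from hu'x.pow 2)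
    have hx2 : HasDerivAt (fun y => y * u y ^ 2)
        (1 * u x ^ 2 + x * (2 * u x * deriv u x)) x := by
      have := (hasDerivAt_id x).mul (by simpa using hux.pow 2)
      simpa using (show HasDerivAt (fun y => y * u y ^ 2) _ x from this)
    have := (show HasDerivAt (fun y => g y + u y ^ 4 - (deriv u y) ^ 2 + y * u y ^ 2) _ x
      from (((hgderiv x).add h4).sub h2).add hx2)
    convert this using 1
    rw [hode x]; ring
  have hFdiff : Differentiable ℝ F := fun x => (hFderiv x).differentiableAt
  have hFconst : ∀ x y : ℝ, F x = F y :=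
    is_const_of_deriv_eq_zero hFdiff (fun x => (hFderiv x).deriv)
  -- limit of F at +∞
  have hgtend : Filter.Tendsto g Filter.atTop (nhds 0) := by
    have hi : Filter.Tendsto (fun x => ∫ t in (0:ℝ)..x, u t ^ 2) Filter.atTop
        (nhds (∫ t in Set.Ioi (0:ℝ), u t ^ 2)) :=
      intervalIntegral_tendsto_integral_Ioi 0
        ((hint 0).mono Set.Ioi_subset_Ici_self le_rfl) Filter.tendsto_id
    have : Filter.Tendsto (fun x => g 0 - ∫ t in (0:ℝ)..x, u t ^ 2) Filter.atTop
        (nhds (g 0 - ∫ t in Set.Ioi (0:ℝ), u t ^ 2)) :=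
      (tendsto_const_nhds).sub hi
    have h0 : g 0 - ∫ t in Set.Ioi (0:ℝ), u t ^ 2 = 0 := by
      rw [hg]; simp [integral_Ici_eq_integral_Ioi]
    rw [h0] at this
    exact this.congr (fun x => (hkey x).symm)
  have hFtend : Filter.Tendsto F Filter.atTop (nhds 0) := by
    have h4 : Filter.Tendsto (fun x => u x ^ 4) Filter.atTop (nhds 0) := by
      simpa using hu0.pow 4
    have h2 : Filter.Tendsto (fun x => (deriv u x) ^ 2) Filter.atTop (nhds 0) := by
      simpa using hu'0.pow 2
    have := ((hgtend.add h4).sub h2).add hxu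
    simpa using this
  intro x
  have : Filter.Tendsto F Filter.atTop (nhds (F x)) := by
    have : F = fun _ => F x := funext fun y => (hFconst y x)
    rw [this]; exact tendsto_const_nhds
  have := tendsto_nhds_unique this hFtend
  simpa [hF, hg] using this
end
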